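/- arXiv:2107.08082 — 2 statements merged into one kernel-verified Lean document; each statement's English description precedes it below -/
import Mathlib

section
/- Let P be a finite poset, R a commutative unital ring, and Ψ an automorphism of I^3(P,R) such that for all x ≤ y ≤ z with l(x,z) ≤ 1 one has Ψ(e_{xyz}) − e_{xyz} ∈ J^3_2(P,R). If moreover, for a fixed k ≥ 1, Ψ(e_{xyz}) − e_{xyz} ∈ J^3_{k+1}(P,R) for all x ≤ y ≤ z with l(x,z) ≤ k, then Ψ(e_{xyz}) − e_{xyz} ∈ J^3_{k+2}(P,R) for all x ≤ y ≤ z with l(x,z) ≤ k+1. -/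
/-- 3-flags (chains x ≤ y ≤ z) in a poset `P`. -/
abbrev Flag3 (P : Type*) [PartialOrder P] : Type _ :=
  {t : P × P × P // t.1 ≤ t.2.1 ∧ t.2.1 ≤ t.2.2}

/-- `ell x y` is the length of the interval `[x,y]`, i.e. the maximal cardinality of a
chain in `[x,y]` minus one. -/
noncomputable def ell {P : Type*} [PartialOrder P] (x y : P) : ℕ∞ :=
  (Set.Icc x y).chainHeight (· < ·) - 1

section PreDefs

variable (P R : Type*) [PartialOrder P] [LocallyFiniteOrder P] [CommRing R]

/-- The multiplication of the partial flag incidence algebra `I^3(P,R)`. -/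
def mul3 : (Flag3 P → R) → (Flag3 P → R) → (Flag3 P → R) := fun f g t =>
  ∑ p ∈ ((Finset.Icc t.1.1 t.1.2.1) ×ˢ (Finset.Icc t.1.2.1 t.1.2.2)).attach,
    f ⟨(t.1.1, p.1.1, p.1.2), by
        obtain ⟨h1, h2⟩ := Finset.mem_product.mp p.2
        rw [Finset.mem_Icc] at h1 h2
        exact ⟨h1.1, h1.2.trans h2.1⟩⟩ *
    g ⟨(p.1.1, p.1.2, t.1.2.2), by
        obtain ⟨h1, h2⟩ := Finset.mem_product.mp p.2
        rw [Finset.mem_Icc] at h1 h2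
        exact ⟨h1.2.trans h2.1, h2.2⟩⟩

variable {P}

/-- The standard basis element `e_t` of `I^3(P,R)`. -/
def e3 [DecidableEq P] (t0 : Flag3 P) : Flag3 P → R := fun t => if t = t0 then 1 else 0

variable (P)

/-- The ideal `J^3_k(P,R)` of functions vanishing on flags `(x,y,z)` with `l(x,z) < k`. -/
def J3 (k : ℕ) : Submodule R (Flag3 P → R) where
  carrier := {f | ∀ t : Flag3 P, ell t.1.1 t.1.2.2 < (k : ℕ∞) → f t = 0}
  add_mem' := by
    intro f g hf hg t ht
    simp only [Pi.add_apply, hf t ht, hg t ht, add_zero]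
  zero_mem' := by intro t _; rfl
  smul_mem' := by
    intro c f hf t ht
    simp only [Pi.smul_apply, hf t ht, smul_zero]

/-- The commutator submodule `[U,V]`. -/
def commSub (U V : Submodule R (Flag3 P → R)) : Submodule R (Flag3 P → R) :=
  Submodule.span R {h | ∃ f ∈ U, ∃ g ∈ V, h = mul3 P R f g - mul3 P R g f}

end PreDefs


set_option linter.unusedSectionVars false

section ElLemmas

variable {P : Type*} [PartialOrder P]

lemma one_le_ch {a c : P} (h : a ≤ c) : 1 ≤ (Set.Icc a c).chainHeight (· < ·) :=
  (Set.one_le_chainHeight_iff _ _).mpr ⟨a, Set.left_mem_Icc.mpr h⟩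

lemma canc1 : AddLECancellable (1 : ℕ∞) :=
  ENat.addLECancellable_of_ne_top (by simp)

lemma enat_add_one_sub_one (x : ℕ∞) : x + 1 - 1 = x := by
  cases x with
  | top => rfl
  | coe n => exact_mod_cast (by omega : n + 1 - 1 = n)

lemma ell_self (a : P) : ell a a = 0 := by
  unfold ell
  rw [Set.Icc_self]
  have : ({a} : Set P).chainHeight (· < ·) = 1 := by
    refine le_antisymm ?_ ((Set.one_le_chainHeight_iff _ _).mpr (Set.singleton_nonempty a))
    exact (Set.chainHeight_le_encard _ _).trans (Set.encard_singleton a).le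
  rw [this]; rfl

lemma one_le_ell {a c : P} (h : a < c) : 1 ≤ ell a c := by
  unfold ell
  have h2 : (2 : ℕ∞) ≤ (Set.Icc a c).chainHeight (· < ·) := by
    have hsub : ({a, c} : Set P) ⊆ Set.Icc a c := by
      intro x hx; rcases hx with rfl | hx
      · exact Set.left_mem_Icc.mpr h.le
      · simp at hx; subst hx; exact Set.right_mem_Icc.mpr h.le
    rw [← Set.encard_pair h.ne]
    refine Set.encard_le_chainHeight_of_isChain _ _ hsub ?_
    intro x hx y hy hxy
    simp only [Set.mem_insert_iff, Set.mem_singleton_iff] at hx hy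
    rcases hx with rfl | rfl <;> rcases hy with rfl | rfl
    · exact absurd rfl hxy
    · exact Or.inl h
    · exact Or.inr h
    · exact absurd rfl hxy
  exact canc1.le_tsub_of_add_le_right (by exact_mod_cast h2)

lemma ell_superadd {a b c : P} (hab : a ≤ b) (hbc : b ≤ c) :
    ell a b + ell b c ≤ ell a c := by
  unfold ell
  have key : (Set.Icc a b).chainHeight (· < ·) + (Set.Icc b c).chainHeight (· < ·)
      ≤ (Set.Icc a c).chainHeight (· < ·) + 1 := by
    rw [Set.chainHeight_eq_iSup (Set.Icc a b), Set.chainHeight_eq_iSup (Set.Icc b c)]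
    haveI : Nonempty {t : Set P // t ⊆ Set.Icc a b ∧ IsChain (· < ·) t} :=
      ⟨⟨∅, Set.empty_subset _, IsChain.empty⟩⟩
    haveI : Nonempty {t : Set P // t ⊆ Set.Icc b c ∧ IsChain (· < ·) t} :=
      ⟨⟨∅, Set.empty_subset _, IsChain.empty⟩⟩
    refine ENat.iSup_add_iSup_le fun t1 t2 => ?_
    rw [← Set.encard_union_add_encard_inter]
    refine add_le_add ?_ ?_
    · refine Set.encard_le_chainHeight_of_isChain _ _ ?_ ?_
      · rintro x (hx | hx)
        · exact ⟨(t1.2.1 hx).1, (t1.2.1 hx).2.trans hbc⟩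
        · exact ⟨hab.trans (t2.2.1 hx).1, (t2.2.1 hx).2⟩
      · intro x hx y hy hxy
        rcases hx with hx | hx <;> rcases hy with hy | hy
        · exact t1.2.2 hx hy hxy
        · exact Or.inl (lt_of_le_of_ne ((t1.2.1 hx).2.trans (t2.2.1 hy).1) hxy)
        · exact Or.inr (lt_of_le_of_ne ((t1.2.1 hy).2.trans (t2.2.1 hx).1) (Ne.symm hxy))
        · exact t2.2.2 hx hy hxy
    · calc (t1.val ∩ t2.val).encard ≤ ({b} : Set P).encard := Set.encard_le_encard (by
            intro x hx
            exact le_antisymm (t1.2.1 hx.1).2 (t2.2.1 hx.2).1)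
        _ = 1 := Set.encard_singleton b
  obtain ⟨A, hA⟩ := exists_add_of_le (one_le_ch hab)
  obtain ⟨B, hB⟩ := exists_add_of_le (one_le_ch hbc)
  rw [add_comm] at hA hB
  rw [hA, hB] at key
  rw [hA, hB, enat_add_one_sub_one, enat_add_one_sub_one]
  refine canc1.le_tsub_of_add_le_right ?_
  have h3 : 1 + (A + B + 1) ≤ 1 + (Set.Icc a c).chainHeight (· < ·) := by
    calc 1 + (A + B + 1) = A + 1 + (B + 1) := by ring
      _ ≤ _ := key
      _ = _ := add_comm _ _
  exact canc1 h3

lemma ell_eq_zero {a c : P} (hac : a ≤ c) (h : ell a c = 0) : a = c := by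
  by_contra hne
  have h1 := one_le_ell (lt_of_le_of_ne hac hne)
  rw [h] at h1
  exact (by norm_num : ¬ (1:ℕ∞) ≤ 0) h1

lemma ell_le_left {a b c : P} (hab : a ≤ b) (hbc : b ≤ c) : ell a b ≤ ell a c :=
  le_trans (le_add_right le_rfl) (ell_superadd hab hbc)

lemma ell_le_right {a b c : P} (hab : a ≤ b) (hbc : b ≤ c) : ell b c ≤ ell a c :=
  le_trans (le_add_left le_rfl) (ell_superadd hab hbc)

lemma kone_ne_top (k : ℕ) : ((k : ℕ∞) + 1) ≠ ⊤ :=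
  WithTop.add_ne_top.mpr ⟨WithTop.coe_ne_top, WithTop.one_ne_top⟩

lemma key1 {k : ℕ} {a u c : P} (hau : a ≤ u) (huc : u ≤ c)
    (hac : ell a c ≤ (k : ℕ∞) + 1) (h : ¬ ell u c < (k : ℕ∞) + 1) : u = a := by
  push_neg at h
  have hne : ell u c ≠ ⊤ := fun ht =>
    (kone_ne_top k) (top_le_iff.mp (ht ▸ (ell_le_right hau huc).trans hac))
  have h0 : ell u c + ell a u ≤ ell u c + 0 := by
    rw [add_zero, add_comm]
    exact le_trans (ell_superadd hau huc) (le_trans hac h)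
  have h1 : ell a u ≤ 0 := (ENat.addLECancellable_of_ne_top hne) h0
  exact (ell_eq_zero hau (le_antisymm h1 zero_le)).symm

lemma key2 {k : ℕ} {a v c : P} (hav : a ≤ v) (hvc : v ≤ c)
    (hac : ell a c ≤ (k : ℕ∞) + 1) (h : ¬ ell a v < (k : ℕ∞) + 1) : v = c := by
  push_neg at h
  have hne : ell a v ≠ ⊤ := fun ht =>
    (kone_ne_top k) (top_le_iff.mp (ht ▸ (ell_le_left hav hvc).trans hac))
  have h0 : ell a v + ell v c ≤ ell a v + 0 := by
    rw [add_zero]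
    exact le_trans (ell_superadd hav hvc) (le_trans hac h)
  have h1 : ell v c ≤ 0 := (ENat.addLECancellable_of_ne_top hne) h0
  exact ell_eq_zero hvc (le_antisymm h1 zero_le)

lemma exists_mid {x z : P} (hxz : x ≤ z) (h2 : 2 ≤ ell x z) : ∃ w, x < w ∧ w < z := by
  have h3 : (3 : ℕ∞) ≤ (Set.Icc x z).chainHeight (· < ·) := by
    calc (3 : ℕ∞) = 2 + 1 := by norm_num
    _ ≤ ((Set.Icc x z).chainHeight (· < ·) - 1) + 1 := by
        exact add_le_add_left h2 1
    _ = (Set.Icc x z).chainHeight (· < ·) := tsub_add_cancel_of_le (one_le_ch hxz)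
  obtain ⟨t, hts, hcard, hch⟩ := Set.exists_isChain_of_le_chainHeight 3 (by exact_mod_cast h3)
  by_contra hne
  have hsub : t ⊆ ({x, z} : Set P) := by
    intro w hw
    have hwI := hts hw
    by_contra hw'
    simp only [Set.mem_insert_iff, Set.mem_singleton_iff, not_or] at hw'
    exact hne ⟨w, lt_of_le_of_ne hwI.1 (Ne.symm hw'.1), lt_of_le_of_ne hwI.2 hw'.2⟩
  have h32 : (3 : ℕ∞) ≤ 2 := by
    calc (3 : ℕ∞) = t.encard := by rw [hcard]; norm_cast
      _ ≤ ({x, z} : Set P).encard := Set.encard_le_encard hsub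
      _ ≤ ({z} : Set P).encard + 1 := Set.encard_insert_le _ _
      _ = 2 := by rw [Set.encard_singleton]; norm_num
  exact absurd h32 (by norm_num)

end ElLemmas


section Core

variable {P R : Type*} [PartialOrder P] [Fintype P] [DecidableEq P] [LocallyFiniteOrder P]
  [CommRing R] {k : ℕ}

lemma flag_eq_iff {a b c x y z : P} {h1 : a ≤ b ∧ b ≤ c} {h2 : x ≤ y ∧ y ≤ z} :
    (⟨(a,b,c), h1⟩ : Flag3 P) = ⟨(x,y,z), h2⟩ ↔ a = x ∧ b = y ∧ c = z := by
  simp [Subtype.ext_iff, Prod.ext_iff]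

lemma mul3_add_expand (f₁ f₂ g₁ g₂ : Flag3 P → R) (u : Flag3 P) :
    mul3 P R (f₁ + f₂) (g₁ + g₂) u
      = mul3 P R f₁ g₁ u + mul3 P R f₁ g₂ u + mul3 P R f₂ g₁ u + mul3 P R f₂ g₂ u := by
  simp only [mul3, Pi.add_apply]
  rw [← Finset.sum_add_distrib, ← Finset.sum_add_distrib, ← Finset.sum_add_distrib]
  apply Finset.sum_congr rfl
  intros; ring

lemma mul3_eT_pos {n a b c : P} (han : a ≤ n)
    (hab : a ≤ b) (hbc : b ≤ c)
    (T : Flag3 P → R)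
    (hbn : b ≤ n) (hnc : n ≤ c) :
    mul3 P R (e3 R ⟨(a,a,n), le_refl a, han⟩) T ⟨(a,b,c), hab, hbc⟩
      = T ⟨(a,n,c), hab.trans hbn, hnc⟩ := by
  simp only [mul3]
  have hmem : ((a, n) : P × P) ∈ (Finset.Icc a b ×ˢ Finset.Icc b c) := by
    rw [Finset.mem_product, Finset.mem_Icc, Finset.mem_Icc]
    exact ⟨⟨le_refl a, hab⟩, hbn, hnc⟩
  have hrest : ∀ q ∈ (Finset.Icc a b ×ˢ Finset.Icc b c).attach,
      q ≠ (⟨(a,n), hmem⟩ : {p // p ∈ (Finset.Icc a b ×ˢ Finset.Icc b c)}) →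
      e3 R (⟨(a,a,n), le_refl a, han⟩ : Flag3 P)
        ⟨(a, q.1.1, q.1.2), by
          have hq2 := Finset.mem_product.mp q.2
          rw [Finset.mem_Icc, Finset.mem_Icc] at hq2
          exact ⟨hq2.1.1, hq2.1.2.trans hq2.2.1⟩⟩ *
      T ⟨(q.1.1, q.1.2, c), by
          have hq2 := Finset.mem_product.mp q.2
          rw [Finset.mem_Icc, Finset.mem_Icc] at hq2
          exact ⟨hq2.1.2.trans hq2.2.1, hq2.2.2⟩⟩ = 0 := by
    intro q _ hne
    simp only [e3]
    rw [if_neg, zero_mul]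
    intro he
    rw [flag_eq_iff] at he
    exact hne (Subtype.ext (Prod.ext he.2.1 he.2.2))
  rw [Finset.sum_eq_single_of_mem _ (Finset.mem_attach _ _) hrest]
  simp [e3]

lemma mul3_eT_neg {x m n a b c : P} (hxm : x ≤ m) (hmn : m ≤ n)
    (hab : a ≤ b) (hbc : b ≤ c) (hac : ell a c ≤ (k : ℕ∞) + 1)
    (T : Flag3 P → R)
    (hT : ∀ u : Flag3 P, ell u.1.1 u.1.2.2 < (k : ℕ∞) + 1 → T u = 0)
    (hcond : ¬ (x = a ∧ m = a ∧ b ≤ n ∧ n ≤ c)) :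
    mul3 P R (e3 R ⟨(x,m,n), hxm, hmn⟩) T ⟨(a,b,c), hab, hbc⟩ = 0 := by
  simp only [mul3]
  apply Finset.sum_eq_zero
  intro q _
  simp only [e3]
  split_ifs with he
  · rw [one_mul]
    rw [flag_eq_iff] at he
    obtain ⟨hax, hqm, hqn⟩ := he
    have hq2 := Finset.mem_product.mp q.2
    rw [Finset.mem_Icc, Finset.mem_Icc] at hq2
    apply hT
    by_contra hcon
    have hqa : q.1.1 = a := key1 hq2.1.1 (le_trans hq2.1.2 hbc) hac hcon
    exact hcond ⟨hax.symm, hqm ▸ hqa, hqn ▸ hq2.2.1, hqn ▸ hq2.2.2⟩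
  · exact zero_mul _

lemma mul3_Se_pos {m' c a b : P} (hmc : m' ≤ c)
    (hab : a ≤ b) (hbc : b ≤ c)
    (S : Flag3 P → R)
    (ham : a ≤ m') (hmb : m' ≤ b) :
    mul3 P R S (e3 R ⟨(m',c,c), hmc, le_refl c⟩) ⟨(a,b,c), hab, hbc⟩
      = S ⟨(a,m',c), ham, hmc⟩ := by
  simp only [mul3]
  have hmem : ((m', c) : P × P) ∈ (Finset.Icc a b ×ˢ Finset.Icc b c) := by
    rw [Finset.mem_product, Finset.mem_Icc, Finset.mem_Icc]
    exact ⟨⟨ham, hmb⟩, hbc, le_refl c⟩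
  have hrest : ∀ q ∈ (Finset.Icc a b ×ˢ Finset.Icc b c).attach,
      q ≠ (⟨(m',c), hmem⟩ : {p // p ∈ (Finset.Icc a b ×ˢ Finset.Icc b c)}) →
      S ⟨(a, q.1.1, q.1.2), by
          have hq2 := Finset.mem_product.mp q.2
          rw [Finset.mem_Icc, Finset.mem_Icc] at hq2
          exact ⟨hq2.1.1, hq2.1.2.trans hq2.2.1⟩⟩ *
      e3 R (⟨(m',c,c), hmc, le_refl c⟩ : Flag3 P)
        ⟨(q.1.1, q.1.2, c), by
          have hq2 := Finset.mem_product.mp q.2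
          rw [Finset.mem_Icc, Finset.mem_Icc] at hq2
          exact ⟨hq2.1.2.trans hq2.2.1, hq2.2.2⟩⟩ = 0 := by
    intro q _ hne
    simp only [e3]
    rw [if_neg, mul_zero]
    intro he
    rw [flag_eq_iff] at he
    exact hne (Subtype.ext (Prod.ext he.1 he.2.1))
  rw [Finset.sum_eq_single_of_mem _ (Finset.mem_attach _ _) hrest]
  simp [e3]

lemma mul3_Se_neg {m' n' z a b c : P} (h1 : m' ≤ n') (h2 : n' ≤ z)
    (hab : a ≤ b) (hbc : b ≤ c) (hac : ell a c ≤ (k : ℕ∞) + 1)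
    (S : Flag3 P → R)
    (hS : ∀ u : Flag3 P, ell u.1.1 u.1.2.2 < (k : ℕ∞) + 1 → S u = 0)
    (hcond : ¬ (z = c ∧ n' = c ∧ a ≤ m' ∧ m' ≤ b)) :
    mul3 P R S (e3 R ⟨(m',n',z), h1, h2⟩) ⟨(a,b,c), hab, hbc⟩ = 0 := by
  simp only [mul3]
  apply Finset.sum_eq_zero
  intro q _
  simp only [e3]
  split_ifs with he
  · rw [mul_one]
    rw [flag_eq_iff] at he
    obtain ⟨hqm, hqn, hzc⟩ := he
    have hq2 := Finset.mem_product.mp q.2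
    rw [Finset.mem_Icc, Finset.mem_Icc] at hq2
    apply hS
    by_contra hcon
    have hqc : q.1.2 = c :=
      key2 (le_trans hq2.1.1 (le_trans hq2.1.2 hq2.2.1)) hq2.2.2 hac hcon
    exact hcond ⟨hzc.symm, by rw [← hqn, hqc], hqm ▸ hq2.1.1, hqm ▸ hq2.1.2⟩
  · exact mul_zero _

lemma mul3_ST {a b c : P}
    (hab : a ≤ b) (hbc : b ≤ c) (hac : ell a c ≤ (k : ℕ∞) + 1)
    (S T : Flag3 P → R)
    (hS : ∀ u : Flag3 P, ell u.1.1 u.1.2.2 < (k : ℕ∞) + 1 → S u = 0)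
    (hT : ∀ u : Flag3 P, ell u.1.1 u.1.2.2 < (k : ℕ∞) + 1 → T u = 0) :
    mul3 P R S T ⟨(a,b,c), hab, hbc⟩
      = S ⟨(a,a,c), le_refl a, hab.trans hbc⟩ * T ⟨(a,c,c), hab.trans hbc, le_refl c⟩ := by
  simp only [mul3]
  have hmem : ((a, c) : P × P) ∈ (Finset.Icc a b ×ˢ Finset.Icc b c) := by
    rw [Finset.mem_product, Finset.mem_Icc, Finset.mem_Icc]
    exact ⟨⟨le_refl a, hab⟩, hbc, le_refl c⟩
  have hrest : ∀ q ∈ (Finset.Icc a b ×ˢ Finset.Icc b c).attach,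
      q ≠ (⟨(a,c), hmem⟩ : {p // p ∈ (Finset.Icc a b ×ˢ Finset.Icc b c)}) →
      S ⟨(a, q.1.1, q.1.2), by
          have hq2 := Finset.mem_product.mp q.2
          rw [Finset.mem_Icc, Finset.mem_Icc] at hq2
          exact ⟨hq2.1.1, hq2.1.2.trans hq2.2.1⟩⟩ *
      T ⟨(q.1.1, q.1.2, c), by
          have hq2 := Finset.mem_product.mp q.2
          rw [Finset.mem_Icc, Finset.mem_Icc] at hq2
          exact ⟨hq2.1.2.trans hq2.2.1, hq2.2.2⟩⟩ = 0 := by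
    intro q _ hne
    have hq2 := Finset.mem_product.mp q.2
    rw [Finset.mem_Icc, Finset.mem_Icc] at hq2
    by_cases h1 : q.1.1 = a
    · by_cases h2 : q.1.2 = c
      · exact absurd (Subtype.ext (Prod.ext h1 h2)) hne
      · apply mul_eq_zero_of_left
        apply hS
        by_contra hcon
        exact h2 (key2 (le_trans hq2.1.1 (le_trans hq2.1.2 hq2.2.1)) hq2.2.2 hac hcon)
    · apply mul_eq_zero_of_right
      apply hT
      by_contra hcon
      exact h1 (key1 hq2.1.1 (le_trans hq2.1.2 hbc) hac hcon)
  rw [Finset.sum_eq_single_of_mem _ (Finset.mem_attach _ _) hrest]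

end Core

section Prods

variable {P R : Type*} [PartialOrder P] [Fintype P] [DecidableEq P] [LocallyFiniteOrder P]
  [CommRing R] {k : ℕ}

lemma prod_unmatched {x m n m' n' z : P} (hxm : x ≤ m) (hmn : m ≤ n)
    (h1 : m' ≤ n') (h2 : n' ≤ z) (hne : ¬ (m' = m ∧ n' = n)) :
    mul3 P R (e3 R ⟨(x,m,n), hxm, hmn⟩) (e3 R ⟨(m',n',z), h1, h2⟩) = 0 := by
  funext u
  obtain ⟨⟨a, b, c⟩, hab, hbc⟩ := u
  rw [Pi.zero_apply]
  simp only [mul3]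
  apply Finset.sum_eq_zero
  intro q _
  simp only [e3]
  split_ifs with he1 he2
  · rw [flag_eq_iff] at he1 he2
    exact absurd ⟨he2.1.symm.trans he1.2.1, he2.2.1.symm.trans he1.2.2⟩ hne
  all_goals simp

lemma prod_matched {x m n z : P} (hxm : x ≤ m) (hmn : m ≤ n) (hnz : n ≤ z) :
    mul3 P R (e3 R ⟨(x,m,n), hxm, hmn⟩) (e3 R ⟨(m,n,z), hmn, hnz⟩)
      = ∑ w ∈ (Finset.Icc m n).attach,
          e3 R ⟨(x, w.1, z), hxm.trans (Finset.mem_Icc.mp w.2).1,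
            (Finset.mem_Icc.mp w.2).2.trans hnz⟩ := by
  funext u
  obtain ⟨⟨a, b, c⟩, hab, hbc⟩ := u
  rw [Finset.sum_apply]
  simp only [mul3]
  by_cases hcond : x = a ∧ z = c ∧ m ≤ b ∧ b ≤ n
  · obtain ⟨hxa, hzc, hmb, hbn⟩ := hcond
    have hmemL : ((m, n) : P × P) ∈ (Finset.Icc a b ×ˢ Finset.Icc b c) := by
      rw [Finset.mem_product, Finset.mem_Icc, Finset.mem_Icc]
      exact ⟨⟨hxa ▸ hxm, hmb⟩, hbn, hzc ▸ hnz⟩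
    have hrestL : ∀ q ∈ (Finset.Icc a b ×ˢ Finset.Icc b c).attach,
        q ≠ (⟨(m,n), hmemL⟩ : {p // p ∈ (Finset.Icc a b ×ˢ Finset.Icc b c)}) →
        e3 R (⟨(x,m,n), hxm, hmn⟩ : Flag3 P)
          ⟨(a, q.1.1, q.1.2), by
            have hq2 := Finset.mem_product.mp q.2
            rw [Finset.mem_Icc, Finset.mem_Icc] at hq2
            exact ⟨hq2.1.1, hq2.1.2.trans hq2.2.1⟩⟩ *
        e3 R (⟨(m,n,z), hmn, hnz⟩ : Flag3 P)
          ⟨(q.1.1, q.1.2, c), by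
            have hq2 := Finset.mem_product.mp q.2
            rw [Finset.mem_Icc, Finset.mem_Icc] at hq2
            exact ⟨hq2.1.2.trans hq2.2.1, hq2.2.2⟩⟩ = 0 := by
      intro q _ hne
      simp only [e3]
      split_ifs with he1 he2
      · rw [flag_eq_iff] at he1
        exact absurd (Subtype.ext (Prod.ext he1.2.1 he1.2.2)) hne
      all_goals simp
    rw [Finset.sum_eq_single_of_mem _ (Finset.mem_attach _ _) hrestL]
    have hmemR : b ∈ Finset.Icc m n := Finset.mem_Icc.mpr ⟨hmb, hbn⟩
    have hrestR : ∀ w ∈ (Finset.Icc m n).attach,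
        w ≠ (⟨b, hmemR⟩ : {p // p ∈ Finset.Icc m n}) →
        e3 R (⟨(x, w.1, z), hxm.trans (Finset.mem_Icc.mp w.2).1,
            (Finset.mem_Icc.mp w.2).2.trans hnz⟩ : Flag3 P) ⟨(a,b,c), hab, hbc⟩ = 0 := by
      intro w _ hne
      simp only [e3]
      rw [if_neg]
      intro he
      rw [flag_eq_iff] at he
      exact hne (Subtype.ext he.2.1.symm)
    rw [Finset.sum_eq_single_of_mem _ (Finset.mem_attach _ _) hrestR]
    simp [e3, flag_eq_iff, hxa, hzc]
  · rw [Finset.sum_eq_zero, Finset.sum_eq_zero]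
    · intro w _
      simp only [e3]
      rw [if_neg]
      intro he
      rw [flag_eq_iff] at he
      have hw2 := Finset.mem_Icc.mp w.2
      exact hcond ⟨he.1.symm, he.2.2.symm, he.2.1 ▸ hw2.1, he.2.1 ▸ hw2.2⟩
    · intro q _
      simp only [e3]
      split_ifs with he1 he2
      · rw [flag_eq_iff] at he1 he2
        have hq2 := Finset.mem_product.mp q.2
        rw [Finset.mem_Icc, Finset.mem_Icc] at hq2
        exact absurd ⟨he1.1.symm, he2.2.2.symm, he1.2.1 ▸ hq2.1.2, he1.2.2 ▸ hq2.2.1⟩ hcond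
      all_goals simp

end Prods

section ElLemmas2

variable {P : Type*} [PartialOrder P] {k : ℕ}

lemma k_lt_k1 {k : ℕ} : (k : ℕ∞) < (k : ℕ∞) + 1 := by
  rw [ENat.lt_add_one_iff (by simp)]

lemma zero_lt_k1 {k : ℕ} : (0 : ℕ∞) < (k : ℕ∞) + 1 :=
  lt_of_lt_of_le zero_lt_one le_add_self

lemma ell_left_le {a b c : P} (hab : a ≤ b) (hbc : b < c)
    (hac : ell a c ≤ (k : ℕ∞) + 1) : ell a b ≤ (k : ℕ∞) := by
  have h1 : ell a b + 1 ≤ (k : ℕ∞) + 1 :=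
    le_trans (add_le_add_right (one_le_ell hbc) _) (le_trans (ell_superadd hab hbc.le) hac)
  exact canc1 (by rw [add_comm 1 (ell a b), add_comm 1 (k : ℕ∞)]; exact h1)

lemma ell_right_le {a b c : P} (hab : a < b) (hbc : b ≤ c)
    (hac : ell a c ≤ (k : ℕ∞) + 1) : ell b c ≤ (k : ℕ∞) := by
  have h1 : 1 + ell b c ≤ 1 + (k : ℕ∞) := by
    calc 1 + ell b c ≤ ell a b + ell b c := add_le_add_left (one_le_ell hab) _
      _ ≤ ell a c := ell_superadd hab.le hbc
      _ ≤ (k : ℕ∞) + 1 := hac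
      _ = 1 + (k : ℕ∞) := add_comm _ _
  exact canc1 h1

lemma crit_ne {a c : P} {k : ℕ} (hκ : ¬ ell a c < (k : ℕ∞) + 1) : a ≠ c := by
  intro h
  subst h
  rw [ell_self] at hκ
  exact hκ zero_lt_k1

end ElLemmas2

section WSec

variable {P R : Type*} [PartialOrder P] [Fintype P] [DecidableEq P] [LocallyFiniteOrder P]
  [CommRing R]

/-- The "defect" of `Ψ` on the basis element `e3 t`. -/
def DD (Ψ : (Flag3 P → R) ≃ₗ[R] (Flag3 P → R)) (t : Flag3 P) : Flag3 P → R :=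
  Ψ (e3 R t) - e3 R t

lemma DD_decomp (Ψ : (Flag3 P → R) ≃ₗ[R] (Flag3 P → R)) (t : Flag3 P) :
    Ψ (e3 R t) = e3 R t + DD Ψ t := by
  unfold DD; ring

variable (Ψ : (Flag3 P → R) ≃ₗ[R] (Flag3 P → R)) {k : ℕ}
variable (hΨ : ∀ f g : Flag3 P → R, Ψ (mul3 P R f g) = mul3 P R (Ψ f) (Ψ g))
variable (hind' : ∀ t : Flag3 P, ell t.1.1 t.1.2.2 ≤ (k : ℕ∞) →
  ∀ u : Flag3 P, ell u.1.1 u.1.2.2 < (k : ℕ∞) + 1 → (Ψ (e3 R t) - e3 R t) u = 0)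

include hind' in
lemma Dshort (t : Flag3 P) (ht : ell t.1.1 t.1.2.2 ≤ (k : ℕ∞)) :
    ∀ u : Flag3 P, ell u.1.1 u.1.2.2 < (k : ℕ∞) + 1 → DD Ψ t u = 0 :=
  fun u hu => hind' t ht u hu

include hΨ in
/-- The master expansion. -/
lemma master {x m n m' n' z a b c : P}
    (hxm : x ≤ m) (hmn : m ≤ n) (h1 : m' ≤ n') (h2 : n' ≤ z)
    (hab : a ≤ b) (hbc : b ≤ c) :
    Ψ (mul3 P R (e3 R ⟨(x,m,n), hxm, hmn⟩) (e3 R ⟨(m',n',z), h1, h2⟩)) ⟨(a,b,c), hab, hbc⟩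
      = mul3 P R (e3 R ⟨(x,m,n), hxm, hmn⟩) (e3 R ⟨(m',n',z), h1, h2⟩) ⟨(a,b,c), hab, hbc⟩
        + mul3 P R (e3 R ⟨(x,m,n), hxm, hmn⟩) (DD Ψ ⟨(m',n',z), h1, h2⟩) ⟨(a,b,c), hab, hbc⟩
        + mul3 P R (DD Ψ ⟨(x,m,n), hxm, hmn⟩) (e3 R ⟨(m',n',z), h1, h2⟩) ⟨(a,b,c), hab, hbc⟩
        + mul3 P R (DD Ψ ⟨(x,m,n), hxm, hmn⟩) (DD Ψ ⟨(m',n',z), h1, h2⟩) ⟨(a,b,c), hab, hbc⟩ := by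
  have h0 := congrFun (hΨ (e3 R ⟨(x,m,n), hxm, hmn⟩) (e3 R ⟨(m',n',z), h1, h2⟩))
    ⟨(a,b,c), hab, hbc⟩
  rw [DD_decomp Ψ ⟨(x,m,n), hxm, hmn⟩, DD_decomp Ψ ⟨(m',n',z), h1, h2⟩,
    mul3_add_expand] at h0
  exact h0

end WSec

section WSec2

variable {P R : Type*} [PartialOrder P] [Fintype P] [DecidableEq P] [LocallyFiniteOrder P]
  [CommRing R]
variable (Ψ : (Flag3 P → R) ≃ₗ[R] (Flag3 P → R)) {k : ℕ}
variable (hΨ : ∀ f g : Flag3 P → R, Ψ (mul3 P R f g) = mul3 P R (Ψ f) (Ψ g))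
variable (hind' : ∀ t : Flag3 P, ell t.1.1 t.1.2.2 ≤ (k : ℕ∞) →
  ∀ u : Flag3 P, ell u.1.1 u.1.2.2 < (k : ℕ∞) + 1 → (Ψ (e3 R t) - e3 R t) u = 0)

include hΨ hind' in
lemma W1 {m' n' z a b0 c : P} (h1 : m' ≤ n') (h2 : n' ≤ z) (hsh : ell m' z ≤ (k : ℕ∞))
    (hab : a ≤ b0) (hbc : b0 ≤ c) (hb0c : b0 ≠ c) (hac : ell a c ≤ (k : ℕ∞) + 1)
    (hne : ¬ (m' = a ∧ n' = b0))
    (hC : z ≠ c ∨ n' ≠ c ∨ m' = a ∨ ¬ (a ≤ m' ∧ m' ≤ c)) :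
    DD Ψ ⟨(m',n',z), h1, h2⟩ ⟨(a,b0,c), hab, hbc⟩ = 0 := by
  have hblt : b0 < c := lt_of_le_of_ne hbc hb0c
  have hac' : a ≤ c := hab.trans hbc
  have hprobe : ell a b0 ≤ (k : ℕ∞) := ell_left_le hab hblt hac
  have hS := Dshort Ψ hind' ⟨(a,a,b0), le_refl a, hab⟩ hprobe
  have hT := Dshort Ψ hind' ⟨(m',n',z), h1, h2⟩ hsh
  have hZ : mul3 P R (e3 R ⟨(a,a,b0), le_refl a, hab⟩) (e3 R ⟨(m',n',z), h1, h2⟩) = 0 :=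
    prod_unmatched (le_refl a) hab h1 h2 hne
  have hb0i := master Ψ hΨ (le_refl a) hab h1 h2 hab hbc
  have hci := master Ψ hΨ (le_refl a) hab h1 h2 hac' (le_refl c)
  simp only [hZ, map_zero, Pi.zero_apply, zero_add] at hb0i hci
  rw [mul3_eT_pos hab hab hbc _ (le_refl b0) hbc] at hb0i
  rw [mul3_eT_neg (le_refl a) hab hac' (le_refl c) hac _ hT
    (by intro hcon; exact (not_le_of_gt hblt) hcon.2.2.1)] at hci
  rw [mul3_ST hab hbc hac _ _ hS hT] at hb0i
  rw [mul3_ST hac' (le_refl c) hac _ _ hS hT] at hci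
  -- now handle the Se-terms according to hC
  rcases hC with hzc | hnc | hma | hnotm
  · rw [mul3_Se_neg h1 h2 hab hbc hac _ hS (by tauto)] at hb0i
    rw [mul3_Se_neg h1 h2 hac' (le_refl c) hac _ hS (by tauto)] at hci
    linear_combination hci - hb0i
  · rw [mul3_Se_neg h1 h2 hab hbc hac _ hS (by tauto)] at hb0i
    rw [mul3_Se_neg h1 h2 hac' (le_refl c) hac _ hS (by tauto)] at hci
    linear_combination hci - hb0i
  · by_cases hzc : z = c ∧ n' = c
    · have hmc : m' ≤ c := hzc.2 ▸ h1
      have hfe : (⟨(m',n',z), h1, h2⟩ : Flag3 P) = ⟨(m',c,c), hmc, le_refl c⟩ :=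
        Subtype.ext (show ((m',n',z) : P × P × P) = (m',c,c) by rw [hzc.1, hzc.2])
      rw [hfe] at hb0i hci ⊢
      rw [mul3_Se_pos hmc hab hbc _ (le_of_eq hma.symm) (hma.le.trans hab)] at hb0i
      rw [mul3_Se_pos hmc hac' (le_refl c) _ (le_of_eq hma.symm) (hma.le.trans hac')] at hci
      linear_combination hci - hb0i
    · rw [mul3_Se_neg h1 h2 hab hbc hac _ hS (by tauto)] at hb0i
      rw [mul3_Se_neg h1 h2 hac' (le_refl c) hac _ hS (by tauto)] at hci
      linear_combination hci - hb0i
  · rw [mul3_Se_neg h1 h2 hab hbc hac _ hS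
        (by intro hcon; exact hnotm ⟨hcon.2.2.1, hcon.2.2.2.trans hbc⟩)] at hb0i
    rw [mul3_Se_neg h1 h2 hac' (le_refl c) hac _ hS
        (by intro hcon; exact hnotm ⟨hcon.2.2.1, hcon.2.2.2⟩)] at hci
    linear_combination hci - hb0i

include hΨ hind' in
lemma W2 {x m n a b0 c : P} (hxm : x ≤ m) (hmn : m ≤ n) (hsh : ell x n ≤ (k : ℕ∞))
    (hab : a ≤ b0) (hbc : b0 ≤ c) (hab0 : a ≠ b0) (hac : ell a c ≤ (k : ℕ∞) + 1)
    (hne : ¬ (m = b0 ∧ n = c))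
    (hC : x ≠ a ∨ m ≠ a ∨ n = c ∨ ¬ (a ≤ n ∧ n ≤ c)) :
    DD Ψ ⟨(x,m,n), hxm, hmn⟩ ⟨(a,b0,c), hab, hbc⟩ = 0 := by
  have hblt : a < b0 := lt_of_le_of_ne hab hab0
  have hac' : a ≤ c := hab.trans hbc
  have hprobe : ell b0 c ≤ (k : ℕ∞) := ell_right_le hblt hbc hac
  have hS := Dshort Ψ hind' ⟨(x,m,n), hxm, hmn⟩ hsh
  have hT := Dshort Ψ hind' ⟨(b0,c,c), hbc, le_refl c⟩ hprobe
  have hZ : mul3 P R (e3 R ⟨(x,m,n), hxm, hmn⟩) (e3 R ⟨(b0,c,c), hbc, le_refl c⟩) = 0 :=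
    prod_unmatched hxm hmn hbc (le_refl c)
      (by intro hcon; exact hne ⟨hcon.1.symm, hcon.2.symm⟩)
  have hb0i := master Ψ hΨ hxm hmn hbc (le_refl c) hab hbc
  have hai := master Ψ hΨ hxm hmn hbc (le_refl c) (le_refl a) hac'
  simp only [hZ, map_zero, Pi.zero_apply, zero_add] at hb0i hai
  rw [mul3_Se_pos hbc hab hbc _ hab (le_refl b0)] at hb0i
  rw [mul3_Se_neg hbc (le_refl c) (le_refl a) hac' hac _ hS
    (by intro hcon; exact (not_le_of_gt hblt) hcon.2.2.2)] at hai
  rw [mul3_ST hab hbc hac _ _ hS hT] at hb0i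
  rw [mul3_ST (le_refl a) hac' hac _ _ hS hT] at hai
  rcases hC with hxa | hma | hnc | hnotn
  · rw [mul3_eT_neg hxm hmn hab hbc hac _ hT (by tauto)] at hb0i
    rw [mul3_eT_neg hxm hmn (le_refl a) hac' hac _ hT (by tauto)] at hai
    linear_combination hai - hb0i
  · rw [mul3_eT_neg hxm hmn hab hbc hac _ hT (by tauto)] at hb0i
    rw [mul3_eT_neg hxm hmn (le_refl a) hac' hac _ hT (by tauto)] at hai
    linear_combination hai - hb0i
  · by_cases hxa : x = a ∧ m = a
    · have han : a ≤ n := hxa.2 ▸ hmn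
      have hfe : (⟨(x,m,n), hxm, hmn⟩ : Flag3 P) = ⟨(a,a,n), le_refl a, han⟩ :=
        Subtype.ext (show ((x,m,n) : P × P × P) = (a,a,n) by rw [hxa.1, hxa.2])
      rw [hfe] at hb0i hai ⊢
      rw [mul3_eT_pos han hab hbc _ (hnc ▸ hbc) (le_of_eq hnc)] at hb0i
      rw [mul3_eT_pos han (le_refl a) hac' _ (hnc ▸ hac') (le_of_eq hnc)] at hai
      linear_combination hai - hb0i
    · rw [mul3_eT_neg hxm hmn hab hbc hac _ hT (by tauto)] at hb0i
      rw [mul3_eT_neg hxm hmn (le_refl a) hac' hac _ hT (by tauto)] at hai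
      linear_combination hai - hb0i
  · rw [mul3_eT_neg hxm hmn hab hbc hac _ hT
      (by intro hcon; exact hnotn ⟨hab.trans hcon.2.2.1, hcon.2.2.2⟩)] at hb0i
    rw [mul3_eT_neg hxm hmn (le_refl a) hac' hac _ hT
      (by intro hcon; exact hnotn ⟨hcon.2.2.1, hcon.2.2.2⟩)] at hai
    linear_combination hai - hb0i

include hΨ in
lemma master_matched {x m n z a b c : P} (hxm : x ≤ m) (hmn : m ≤ n) (hnz : n ≤ z)
    (hab : a ≤ b) (hbc : b ≤ c) :
    (∑ w ∈ (Finset.Icc m n).attach,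
        DD Ψ ⟨(x, w.1, z), hxm.trans (Finset.mem_Icc.mp w.2).1,
          (Finset.mem_Icc.mp w.2).2.trans hnz⟩ ⟨(a,b,c), hab, hbc⟩)
      = mul3 P R (e3 R ⟨(x,m,n), hxm, hmn⟩) (DD Ψ ⟨(m,n,z), hmn, hnz⟩) ⟨(a,b,c), hab, hbc⟩
        + mul3 P R (DD Ψ ⟨(x,m,n), hxm, hmn⟩) (e3 R ⟨(m,n,z), hmn, hnz⟩) ⟨(a,b,c), hab, hbc⟩
        + mul3 P R (DD Ψ ⟨(x,m,n), hxm, hmn⟩) (DD Ψ ⟨(m,n,z), hmn, hnz⟩)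
            ⟨(a,b,c), hab, hbc⟩ := by
  have h0 := master Ψ hΨ hxm hmn hmn hnz hab hbc
  rw [prod_matched hxm hmn hnz, map_sum, Finset.sum_apply, Finset.sum_apply] at h0
  have h2 : ∀ w ∈ (Finset.Icc m n).attach,
      (Ψ (e3 R ⟨(x, w.1, z), hxm.trans (Finset.mem_Icc.mp w.2).1,
          (Finset.mem_Icc.mp w.2).2.trans hnz⟩)) ⟨(a,b,c), hab, hbc⟩
        = e3 R (⟨(x, w.1, z), hxm.trans (Finset.mem_Icc.mp w.2).1,
            (Finset.mem_Icc.mp w.2).2.trans hnz⟩ : Flag3 P) ⟨(a,b,c), hab, hbc⟩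
          + DD Ψ ⟨(x, w.1, z), hxm.trans (Finset.mem_Icc.mp w.2).1,
            (Finset.mem_Icc.mp w.2).2.trans hnz⟩ ⟨(a,b,c), hab, hbc⟩ := by
    intro w _
    rw [DD_decomp]
    rfl
  rw [Finset.sum_congr rfl h2, Finset.sum_add_distrib] at h0
  linear_combination h0

include hΨ hind' in
lemma W3 {a z c : P} (haz : a ≤ z) (hsh : ell a z ≤ (k : ℕ∞))
    (hac : a ≤ c) (hl : ell a c ≤ (k : ℕ∞) + 1) :
    DD Ψ ⟨(a,a,z), le_refl a, haz⟩ ⟨(a,c,c), hac, le_refl c⟩ = 0 := by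
  have hT := Dshort Ψ hind' ⟨(a,a,z), le_refl a, haz⟩ hsh
  by_cases hcrit : ell a c < (k : ℕ∞) + 1
  · exact hT _ hcrit
  have hanec : a ≠ c := crit_ne hcrit
  have hS := Dshort Ψ hind' ⟨(a,a,a), le_refl a, le_refl a⟩ (by
    show ell a a ≤ (k : ℕ∞); rw [ell_self]; exact zero_le)
  have hred : ∀ (b : P) (hab' : a ≤ b) (hbc' : b ≤ c),
      (∑ w ∈ (Finset.Icc a a).attach,
        DD Ψ ⟨(a, w.1, z), (le_refl a).trans (Finset.mem_Icc.mp w.2).1,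
          (Finset.mem_Icc.mp w.2).2.trans haz⟩ ⟨(a,b,c), hab', hbc'⟩)
        = DD Ψ ⟨(a,a,z), le_refl a, haz⟩ ⟨(a,b,c), hab', hbc'⟩ := by
    intro b hab' hbc'
    have hmem : a ∈ Finset.Icc a a := Finset.mem_Icc.mpr ⟨le_refl a, le_refl a⟩
    rw [Finset.sum_eq_single_of_mem (⟨a, hmem⟩ : {p // p ∈ Finset.Icc a a})
      (Finset.mem_attach _ _)]
    intro q _ hqne
    exfalso
    apply hqne
    apply Subtype.ext
    have := Finset.mem_Icc.mp q.2
    exact le_antisymm this.2 this.1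
  have hE1 := master_matched Ψ hΨ (le_refl a) (le_refl a) haz hac (le_refl c)
  have hE2 := master_matched Ψ hΨ (le_refl a) (le_refl a) haz (le_refl a) hac
  rw [hred c hac (le_refl c)] at hE1
  rw [hred a (le_refl a) hac] at hE2
  rw [mul3_eT_neg (le_refl a) (le_refl a) hac (le_refl c) hl _ hT
    (fun hcon => (lt_of_le_of_ne hac hanec).not_ge hcon.2.2.1)] at hE1
  rw [mul3_eT_pos (le_refl a) (le_refl a) hac _ (le_refl a) hac] at hE2
  rw [mul3_Se_neg (le_refl a) haz hac (le_refl c) hl _ hS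
    (fun hcon => hanec hcon.2.1)] at hE1
  rw [mul3_Se_neg (le_refl a) haz (le_refl a) hac hl _ hS
    (fun hcon => hanec hcon.2.1)] at hE2
  rw [mul3_ST hac (le_refl c) hl _ _ hS hT] at hE1
  rw [mul3_ST (le_refl a) hac hl _ _ hS hT] at hE2
  linear_combination hE1 - hE2

include hΨ hind' in
lemma W4 {x a c : P} (hxc : x ≤ c) (hsh : ell x c ≤ (k : ℕ∞))
    (hac : a ≤ c) (hl : ell a c ≤ (k : ℕ∞) + 1) :
    DD Ψ ⟨(x,c,c), hxc, le_refl c⟩ ⟨(a,a,c), le_refl a, hac⟩ = 0 := by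
  have hS := Dshort Ψ hind' ⟨(x,c,c), hxc, le_refl c⟩ hsh
  by_cases hcrit : ell a c < (k : ℕ∞) + 1
  · exact hS _ hcrit
  have hanec : a ≠ c := crit_ne hcrit
  have hT := Dshort Ψ hind' ⟨(c,c,c), le_refl c, le_refl c⟩ (by
    show ell c c ≤ (k : ℕ∞); rw [ell_self]; exact zero_le)
  have hred : ∀ (b : P) (hab' : a ≤ b) (hbc' : b ≤ c),
      (∑ w ∈ (Finset.Icc c c).attach,
        DD Ψ ⟨(x, w.1, c), hxc.trans (Finset.mem_Icc.mp w.2).1,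
          (Finset.mem_Icc.mp w.2).2.trans (le_refl c)⟩ ⟨(a,b,c), hab', hbc'⟩)
        = DD Ψ ⟨(x,c,c), hxc, le_refl c⟩ ⟨(a,b,c), hab', hbc'⟩ := by
    intro b hab' hbc'
    have hmem : c ∈ Finset.Icc c c := Finset.mem_Icc.mpr ⟨le_refl c, le_refl c⟩
    rw [Finset.sum_eq_single_of_mem (⟨c, hmem⟩ : {p // p ∈ Finset.Icc c c})
      (Finset.mem_attach _ _)]
    intro q _ hqne
    exfalso
    apply hqne
    apply Subtype.ext
    have := Finset.mem_Icc.mp q.2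
    exact le_antisymm this.2 this.1
  have hE1 := master_matched Ψ hΨ hxc (le_refl c) (le_refl c) (le_refl a) hac
  have hE2 := master_matched Ψ hΨ hxc (le_refl c) (le_refl c) hac (le_refl c)
  rw [hred a (le_refl a) hac] at hE1
  rw [hred c hac (le_refl c)] at hE2
  rw [mul3_eT_neg hxc (le_refl c) (le_refl a) hac hl _ hT
    (fun hcon => hanec hcon.2.1.symm)] at hE1
  rw [mul3_eT_neg hxc (le_refl c) hac (le_refl c) hl _ hT
    (fun hcon => hanec hcon.2.1.symm)] at hE2
  rw [mul3_Se_neg (le_refl c) (le_refl c) (le_refl a) hac hl _ hS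
    (fun hcon => (lt_of_le_of_ne hac hanec).not_ge hcon.2.2.2)] at hE1
  rw [mul3_Se_pos (le_refl c) hac (le_refl c) _ hac (le_refl c)] at hE2
  rw [mul3_ST (le_refl a) hac hl _ _ hS hT] at hE1
  rw [mul3_ST hac (le_refl c) hl _ _ hS hT] at hE2
  linear_combination hE1 - hE2

include hΨ hind' in
lemma W5 {a z c : P} (haz : a < z) (hsh : ell a z ≤ (k : ℕ∞))
    (hac : a ≤ c) (hl : ell a c ≤ (k : ℕ∞) + 1) :
    DD Ψ ⟨(a,a,z), le_refl a, haz.le⟩ ⟨(a,a,c), le_refl a, hac⟩ = 0 := by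
  have hT0 := Dshort Ψ hind' ⟨(a,a,z), le_refl a, haz.le⟩ hsh
  by_cases hcrit : ell a c < (k : ℕ∞) + 1
  · exact hT0 _ hcrit
  have hanec : a ≠ c := crit_ne hcrit
  have hzc : z ≠ c := fun h => hcrit (lt_of_le_of_lt (h ▸ hsh) k_lt_k1)
  have hT := Dshort Ψ hind' ⟨(a,z,z), haz.le, le_refl z⟩ hsh
  have hE := master_matched Ψ hΨ (le_refl a) haz.le (le_refl z) (le_refl a) hac
  -- reduce the sum on the left to the single term w = a
  have hmem : a ∈ Finset.Icc a z := Finset.mem_Icc.mpr ⟨le_refl a, haz.le⟩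
  have hrest : ∀ q ∈ (Finset.Icc a z).attach,
      q ≠ (⟨a, hmem⟩ : {p // p ∈ Finset.Icc a z}) →
      DD Ψ ⟨(a, q.1, z), (le_refl a).trans (Finset.mem_Icc.mp q.2).1,
        (Finset.mem_Icc.mp q.2).2.trans (le_refl z)⟩ ⟨(a,a,c), le_refl a, hac⟩ = 0 := by
    intro q _ hqne
    have hq := Finset.mem_Icc.mp q.2
    refine W1 Ψ hΨ hind' hq.1 hq.2 hsh (le_refl a) hac hanec hl ?_
      (Or.inr (Or.inr (Or.inl rfl)))
    intro hcon
    exact hqne (Subtype.ext hcon.2)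
  rw [Finset.sum_eq_single_of_mem _ (Finset.mem_attach _ _) hrest] at hE
  -- the eT term vanishes
  have heT : mul3 P R (e3 R ⟨(a,a,z), le_refl a, haz.le⟩)
      (DD Ψ ⟨(a,z,z), haz.le, le_refl z⟩) ⟨(a,a,c), le_refl a, hac⟩ = 0 := by
    by_cases hzc2 : z ≤ c
    · rw [mul3_eT_pos haz.le (le_refl a) hac _ haz.le hzc2]
      exact W2 Ψ hΨ hind' haz.le (le_refl z) hsh haz.le hzc2 haz.ne hl
        (fun h => hzc h.2) (Or.inr (Or.inl haz.ne'))
    · exact mul3_eT_neg (le_refl a) haz.le (le_refl a) hac hl _ hT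
        (fun hcon => hzc2 hcon.2.2.2)
  rw [heT] at hE
  rw [mul3_Se_neg haz.le (le_refl z) (le_refl a) hac hl _ hT0
    (fun hcon => hzc hcon.1)] at hE
  rw [mul3_ST (le_refl a) hac hl _ _ hT0 hT] at hE
  have hw2 : DD Ψ ⟨(a,z,z), haz.le, le_refl z⟩ ⟨(a,c,c), hac, le_refl c⟩ = 0 :=
    W2 Ψ hΨ hind' haz.le (le_refl z) hsh hac (le_refl c) hanec hl
      (fun h => hzc h.1) (Or.inr (Or.inl haz.ne'))
  linear_combination hE + DD Ψ ⟨(a,a,z), le_refl a, haz.le⟩ ⟨(a,a,c), le_refl a, hac⟩ * hw2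

include hΨ hind' in
lemma W6 {x a c : P} (hxc : x < c) (hsh : ell x c ≤ (k : ℕ∞))
    (hac : a ≤ c) (hl : ell a c ≤ (k : ℕ∞) + 1) :
    DD Ψ ⟨(x,c,c), hxc.le, le_refl c⟩ ⟨(a,c,c), hac, le_refl c⟩ = 0 := by
  have hS0 := Dshort Ψ hind' ⟨(x,c,c), hxc.le, le_refl c⟩ hsh
  by_cases hcrit : ell a c < (k : ℕ∞) + 1
  · exact hS0 _ hcrit
  have hanec : a ≠ c := crit_ne hcrit
  have hxa : x ≠ a := fun h => hcrit (lt_of_le_of_lt (h ▸ hsh) k_lt_k1)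
  have hS := Dshort Ψ hind' ⟨(x,x,c), le_refl x, hxc.le⟩ hsh
  have hE := master_matched Ψ hΨ (le_refl x) hxc.le (le_refl c) hac (le_refl c)
  have hmem : c ∈ Finset.Icc x c := Finset.mem_Icc.mpr ⟨hxc.le, le_refl c⟩
  have hrest : ∀ q ∈ (Finset.Icc x c).attach,
      q ≠ (⟨c, hmem⟩ : {p // p ∈ Finset.Icc x c}) →
      DD Ψ ⟨(x, q.1, c), (le_refl x).trans (Finset.mem_Icc.mp q.2).1,
        (Finset.mem_Icc.mp q.2).2.trans (le_refl c)⟩ ⟨(a,c,c), hac, le_refl c⟩ = 0 := by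
    intro q _ hqne
    have hq := Finset.mem_Icc.mp q.2
    refine W2 Ψ hΨ hind' hq.1 hq.2 hsh hac (le_refl c) hanec hl ?_
      (Or.inr (Or.inr (Or.inl rfl)))
    intro hcon
    exact hqne (Subtype.ext hcon.1)
  rw [Finset.sum_eq_single_of_mem _ (Finset.mem_attach _ _) hrest] at hE
  rw [mul3_eT_neg (le_refl x) hxc.le hac (le_refl c) hl _ hS0
    (fun hcon => hxa hcon.1)] at hE
  have hSe : mul3 P R (DD Ψ ⟨(x,x,c), le_refl x, hxc.le⟩)
      (e3 R ⟨(x,c,c), hxc.le, le_refl c⟩) ⟨(a,c,c), hac, le_refl c⟩ = 0 := by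
    by_cases hax : a ≤ x
    · rw [mul3_Se_pos hxc.le hac (le_refl c) _ hax hxc.le]
      exact W1 Ψ hΨ hind' (le_refl x) hxc.le hsh hax hxc.le hxc.ne hl
        (fun h => hxa h.1) (Or.inr (Or.inl hxc.ne))
    · exact mul3_Se_neg hxc.le (le_refl c) hac (le_refl c) hl _ hS
        (fun hcon => hax hcon.2.2.1)
  rw [hSe] at hE
  rw [mul3_ST hac (le_refl c) hl _ _ hS hS0] at hE
  have hw1 : DD Ψ ⟨(x,x,c), le_refl x, hxc.le⟩ ⟨(a,a,c), le_refl a, hac⟩ = 0 :=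
    W1 Ψ hΨ hind' (le_refl x) hxc.le hsh (le_refl a) hac hanec hl
      (fun h => hxa h.1) (Or.inr (Or.inl hxc.ne))
  linear_combination hE + hw1 * DD Ψ ⟨(x,c,c), hxc.le, le_refl c⟩ ⟨(a,c,c), hac, le_refl c⟩

include hΨ hind' in
lemma Wshort {m' n' z a b c : P} (h1 : m' ≤ n') (h2 : n' ≤ z) (hsh : ell m' z ≤ (k : ℕ∞))
    (hab : a ≤ b) (hbc : b ≤ c) (hl : ell a c ≤ (k : ℕ∞) + 1)
    (hX1 : ¬ (m' = a ∧ n' = a ∧ z = a ∧ b = a))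
    (hX2 : ¬ (m' = c ∧ n' = c ∧ z = c ∧ b = c)) :
    DD Ψ ⟨(m',n',z), h1, h2⟩ ⟨(a,b,c), hab, hbc⟩ = 0 := by
  have hD := Dshort Ψ hind' ⟨(m',n',z), h1, h2⟩ hsh
  by_cases hcrit : ell a c < (k : ℕ∞) + 1
  · exact hD _ hcrit
  have hanec : a ≠ c := crit_ne hcrit
  have hac' : a ≤ c := hab.trans hbc
  by_cases hbceq : b = c
  · have hfu : (⟨(a,b,c), hab, hbc⟩ : Flag3 P) = ⟨(a,c,c), hac', le_refl c⟩ :=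
      Subtype.ext (show ((a,b,c) : P × P × P) = (a,c,c) by rw [hbceq])
    rw [hfu]
    by_cases hnz : n' = c ∧ z = c
    · by_cases hmc : m' = c
      · exact absurd ⟨hmc, hnz.1, hnz.2, hbceq⟩ hX2
      · have hmc' : m' ≤ c := hnz.1 ▸ h1
        have hfe : (⟨(m',n',z), h1, h2⟩ : Flag3 P) = ⟨(m',c,c), hmc', le_refl c⟩ :=
          Subtype.ext (show ((m',n',z) : P × P × P) = (m',c,c) by rw [hnz.1, hnz.2])
        rw [hfe]
        exact W6 Ψ hΨ hind' (lt_of_le_of_ne hmc' hmc) (hnz.2 ▸ hsh) hac' hl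
    · by_cases hma : m' = a ∧ n' = a
      · have haz : a ≤ z := hma.2 ▸ h2
        have hfe : (⟨(m',n',z), h1, h2⟩ : Flag3 P) = ⟨(a,a,z), le_refl a, haz⟩ :=
          Subtype.ext (show ((m',n',z) : P × P × P) = (a,a,z) by rw [hma.1, hma.2])
        rw [hfe]
        exact W3 Ψ hΨ hind' haz (hma.1 ▸ hsh) hac' hl
      · refine W2 Ψ hΨ hind' h1 h2 hsh hac' (le_refl c) hanec hl
          (fun hcon => hnz ⟨hcon.1, hcon.2⟩) ?_
        rcases not_and_or.mp hma with h | h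
        · exact Or.inl h
        · exact Or.inr (Or.inl h)
  · have hblt : b < c := lt_of_le_of_ne hbc hbceq
    by_cases habeq : a = b
    · have hfu : (⟨(a,b,c), hab, hbc⟩ : Flag3 P) = ⟨(a,a,c), le_refl a, hac'⟩ :=
        Subtype.ext (show ((a,b,c) : P × P × P) = (a,a,c) by rw [← habeq])
      rw [hfu]
      by_cases hma : m' = a ∧ n' = a
      · by_cases hza : z = a
        · exact absurd ⟨hma.1, hma.2, hza, habeq.symm⟩ hX1
        · have haz : a < z := lt_of_le_of_ne (hma.2 ▸ h2) (Ne.symm hza)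
          have hfe : (⟨(m',n',z), h1, h2⟩ : Flag3 P) = ⟨(a,a,z), le_refl a, haz.le⟩ :=
            Subtype.ext (show ((m',n',z) : P × P × P) = (a,a,z) by rw [hma.1, hma.2])
          rw [hfe]
          exact W5 Ψ hΨ hind' haz (hma.1 ▸ hsh) hac' hl
      · by_cases hnz : n' = c ∧ z = c
        · have hmc' : m' ≤ c := hnz.1 ▸ h1
          have hfe : (⟨(m',n',z), h1, h2⟩ : Flag3 P) = ⟨(m',c,c), hmc', le_refl c⟩ :=
            Subtype.ext (show ((m',n',z) : P × P × P) = (m',c,c) by rw [hnz.1, hnz.2])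
          rw [hfe]
          exact W4 Ψ hΨ hind' hmc' (hnz.2 ▸ hsh) hac' hl
        · refine W1 Ψ hΨ hind' h1 h2 hsh (le_refl a) hac' hanec hl hma ?_
          rcases not_and_or.mp hnz with h | h
          · exact Or.inr (Or.inl h)
          · exact Or.inl h
    · have hablt : a < b := lt_of_le_of_ne hab habeq
      by_cases hmn : m' = a ∧ n' = b
      · have hzc : z ≠ c := by
          intro h
          apply hcrit
          refine lt_of_le_of_lt ?_ k_lt_k1
          calc ell a c = ell m' z := by rw [hmn.1, h]
            _ ≤ (k : ℕ∞) := hsh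
        refine W2 Ψ hΨ hind' h1 h2 hsh hab hbc habeq hl
          (fun hcon => hzc hcon.2) ?_
        exact Or.inr (Or.inl (by rw [hmn.2]; exact hablt.ne'))
      · by_cases hCf : z = c ∧ n' = c ∧ m' ≠ a ∧ (a ≤ m' ∧ m' ≤ c)
        · refine W2 Ψ hΨ hind' h1 h2 hsh hab hbc habeq hl
            (fun hcon => hbceq (hcon.1.symm.trans hCf.2.1)) ?_
          exact Or.inr (Or.inl (by rw [hCf.2.1]; exact Ne.symm hanec))
        · refine W1 Ψ hΨ hind' h1 h2 hsh hab hbc hbceq hl hmn ?_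
          tauto

include hΨ hind' in
lemma LM {x y z : P} (hxy : x < y) (hyz : y < z) (htl : ell x z ≤ (k : ℕ∞) + 1)
    {a b c : P} (hab : a ≤ b) (hbc : b ≤ c) (hl : ell a c ≤ (k : ℕ∞) + 1) :
    DD Ψ ⟨(x,y,z), hxy.le, hyz.le⟩ ⟨(a,b,c), hab, hbc⟩ = 0 := by
  have hsh1 : ell x y ≤ (k : ℕ∞) := ell_left_le hxy.le hyz htl
  have hsh2 : ell y z ≤ (k : ℕ∞) := ell_right_le hxy hyz.le htl
  have hS := Dshort Ψ hind' ⟨(x,y,y), hxy.le, le_refl y⟩ hsh1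
  have hT := Dshort Ψ hind' ⟨(y,y,z), le_refl y, hyz.le⟩ hsh2
  have hE := master_matched Ψ hΨ hxy.le (le_refl y) hyz.le hab hbc
  have hmem : y ∈ Finset.Icc y y := Finset.mem_Icc.mpr ⟨le_refl y, le_refl y⟩
  have hrest : ∀ q ∈ (Finset.Icc y y).attach,
      q ≠ (⟨y, hmem⟩ : {p // p ∈ Finset.Icc y y}) →
      DD Ψ ⟨(x, q.1, z), hxy.le.trans (Finset.mem_Icc.mp q.2).1,
        (Finset.mem_Icc.mp q.2).2.trans hyz.le⟩ ⟨(a,b,c), hab, hbc⟩ = 0 := by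
    intro q _ hqne
    exfalso
    apply hqne
    apply Subtype.ext
    have := Finset.mem_Icc.mp q.2
    exact le_antisymm this.2 this.1
  rw [Finset.sum_eq_single_of_mem _ (Finset.mem_attach _ _) hrest] at hE
  rw [mul3_eT_neg hxy.le (le_refl y) hab hbc hl _ hT
    (fun hcon => hxy.ne (hcon.1.trans hcon.2.1.symm))] at hE
  rw [mul3_Se_neg (le_refl y) hyz.le hab hbc hl _ hS
    (fun hcon => hyz.ne (hcon.2.1.trans hcon.1.symm))] at hE
  rw [mul3_ST hab hbc hl _ _ hS hT] at hE
  have hws : DD Ψ ⟨(x,y,y), hxy.le, le_refl y⟩ ⟨(a,a,c), le_refl a, hab.trans hbc⟩ = 0 :=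
    Wshort Ψ hΨ hind' hxy.le (le_refl y) hsh1 (le_refl a) (hab.trans hbc) hl
      (fun h => hxy.ne (h.1.trans h.2.1.symm)) (fun h => hxy.ne (h.1.trans h.2.1.symm))
  linear_combination hE + hws *
    DD Ψ ⟨(y,y,z), le_refl y, hyz.le⟩ ⟨(a,c,c), hab.trans hbc, le_refl c⟩

include hΨ hind' in
lemma LL {x z : P} (hk : 1 ≤ k) (hxz : x < z) (hlong : ¬ ell x z ≤ (k : ℕ∞))
    (htl : ell x z ≤ (k : ℕ∞) + 1)
    {a b c : P} (hab : a ≤ b) (hbc : b ≤ c) (hl : ell a c ≤ (k : ℕ∞) + 1) :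
    DD Ψ ⟨(x,x,z), le_refl x, hxz.le⟩ ⟨(a,b,c), hab, hbc⟩ = 0 := by
  have h2 : (2 : ℕ∞) ≤ ell x z := by
    have hk1 : (k : ℕ∞) + 1 ≤ ell x z := by
      rw [ENat.add_one_le_iff (by simp)]
      exact not_le.mp hlong
    refine le_trans ?_ hk1
    have : (1 : ℕ∞) ≤ (k : ℕ∞) := by exact_mod_cast hk
    calc (2 : ℕ∞) = 1 + 1 := by norm_num
      _ ≤ (k : ℕ∞) + 1 := add_le_add_left this 1
  obtain ⟨w, hxw, hwz⟩ := exists_mid hxz.le h2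
  have hshs : ell x w ≤ (k : ℕ∞) := ell_left_le hxw.le hwz htl
  have hS := Dshort Ψ hind' ⟨(x,x,w), le_refl x, hxw.le⟩ hshs
  have hTfull : ∀ (p q r : P) (hpq : p ≤ q) (hqr : q ≤ r), ell p r ≤ (k : ℕ∞) + 1 →
      DD Ψ ⟨(x,w,z), hxw.le, hwz.le⟩ ⟨(p,q,r), hpq, hqr⟩ = 0 :=
    fun p q r hpq hqr hl' => LM Ψ hΨ hind' hxw hwz htl hpq hqr hl'
  have hT : ∀ u : Flag3 P, ell u.1.1 u.1.2.2 < (k : ℕ∞) + 1 →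
      DD Ψ ⟨(x,w,z), hxw.le, hwz.le⟩ u = 0 := by
    intro u hu
    obtain ⟨⟨p,q,r⟩, hpq, hqr⟩ := u
    exact hTfull p q r hpq hqr (le_of_lt hu)
  have hE := master_matched Ψ hΨ (le_refl x) hxw.le hwz.le hab hbc
  have hmem : x ∈ Finset.Icc x w := Finset.mem_Icc.mpr ⟨le_refl x, hxw.le⟩
  have hrest : ∀ q ∈ (Finset.Icc x w).attach,
      q ≠ (⟨x, hmem⟩ : {p // p ∈ Finset.Icc x w}) →
      DD Ψ ⟨(x, q.1, z), (le_refl x).trans (Finset.mem_Icc.mp q.2).1,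
        (Finset.mem_Icc.mp q.2).2.trans hwz.le⟩ ⟨(a,b,c), hab, hbc⟩ = 0 := by
    intro q _ hqne
    have hq := Finset.mem_Icc.mp q.2
    have hxq : x < q.1 := lt_of_le_of_ne hq.1 (fun h => hqne (Subtype.ext h.symm))
    exact LM Ψ hΨ hind' hxq (lt_of_le_of_lt hq.2 hwz) htl hab hbc hl
  rw [Finset.sum_eq_single_of_mem _ (Finset.mem_attach _ _) hrest] at hE
  have heT : mul3 P R (e3 R ⟨(x,x,w), le_refl x, hxw.le⟩)
      (DD Ψ ⟨(x,w,z), hxw.le, hwz.le⟩) ⟨(a,b,c), hab, hbc⟩ = 0 := by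
    by_cases hcond : x = a ∧ x = a ∧ b ≤ w ∧ w ≤ c
    · have hfe : (⟨(x,x,w), le_refl x, hxw.le⟩ : Flag3 P)
          = ⟨(a,a,w), le_refl a, hcond.1 ▸ hxw.le⟩ :=
        Subtype.ext (show ((x,x,w) : P × P × P) = (a,a,w) by rw [hcond.1])
      rw [hfe, mul3_eT_pos (hcond.1 ▸ hxw.le) hab hbc _ hcond.2.2.1 hcond.2.2.2]
      exact hTfull a w c (hab.trans hcond.2.2.1) hcond.2.2.2 hl
    · exact mul3_eT_neg (le_refl x) hxw.le hab hbc hl _ hT hcond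
  rw [heT] at hE
  rw [mul3_Se_neg hxw.le hwz.le hab hbc hl _ hS
    (fun hcon => hwz.ne (hcon.2.1.trans hcon.1.symm))] at hE
  rw [mul3_ST hab hbc hl _ _ hS hT] at hE
  have hY : DD Ψ ⟨(x,w,z), hxw.le, hwz.le⟩ ⟨(a,c,c), hab.trans hbc, le_refl c⟩ = 0 :=
    hTfull a c c (hab.trans hbc) (le_refl c) hl
  linear_combination hE +
    DD Ψ ⟨(x,x,w), le_refl x, hxw.le⟩ ⟨(a,a,c), le_refl a, hab.trans hbc⟩ * hY

include hΨ hind' in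
lemma LR {x z : P} (hk : 1 ≤ k) (hxz : x < z) (hlong : ¬ ell x z ≤ (k : ℕ∞))
    (htl : ell x z ≤ (k : ℕ∞) + 1)
    {a b c : P} (hab : a ≤ b) (hbc : b ≤ c) (hl : ell a c ≤ (k : ℕ∞) + 1) :
    DD Ψ ⟨(x,z,z), hxz.le, le_refl z⟩ ⟨(a,b,c), hab, hbc⟩ = 0 := by
  have h2 : (2 : ℕ∞) ≤ ell x z := by
    have hk1 : (k : ℕ∞) + 1 ≤ ell x z := by
      rw [ENat.add_one_le_iff (by simp)]
      exact not_le.mp hlong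
    refine le_trans ?_ hk1
    have : (1 : ℕ∞) ≤ (k : ℕ∞) := by exact_mod_cast hk
    calc (2 : ℕ∞) = 1 + 1 := by norm_num
      _ ≤ (k : ℕ∞) + 1 := add_le_add_left this 1
  obtain ⟨w, hxw, hwz⟩ := exists_mid hxz.le h2
  have hsht : ell w z ≤ (k : ℕ∞) := ell_right_le hxw hwz.le htl
  have hT := Dshort Ψ hind' ⟨(w,z,z), hwz.le, le_refl z⟩ hsht
  have hSfull : ∀ (p q r : P) (hpq : p ≤ q) (hqr : q ≤ r), ell p r ≤ (k : ℕ∞) + 1 →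
      DD Ψ ⟨(x,w,z), hxw.le, hwz.le⟩ ⟨(p,q,r), hpq, hqr⟩ = 0 :=
    fun p q r hpq hqr hl' => LM Ψ hΨ hind' hxw hwz htl hpq hqr hl'
  have hS : ∀ u : Flag3 P, ell u.1.1 u.1.2.2 < (k : ℕ∞) + 1 →
      DD Ψ ⟨(x,w,z), hxw.le, hwz.le⟩ u = 0 := by
    intro u hu
    obtain ⟨⟨p,q,r⟩, hpq, hqr⟩ := u
    exact hSfull p q r hpq hqr (le_of_lt hu)
  have hE := master_matched Ψ hΨ hxw.le hwz.le (le_refl z) hab hbc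
  have hmem : z ∈ Finset.Icc w z := Finset.mem_Icc.mpr ⟨hwz.le, le_refl z⟩
  have hrest : ∀ q ∈ (Finset.Icc w z).attach,
      q ≠ (⟨z, hmem⟩ : {p // p ∈ Finset.Icc w z}) →
      DD Ψ ⟨(x, q.1, z), hxw.le.trans (Finset.mem_Icc.mp q.2).1,
        (Finset.mem_Icc.mp q.2).2.trans (le_refl z)⟩ ⟨(a,b,c), hab, hbc⟩ = 0 := by
    intro q _ hqne
    have hq := Finset.mem_Icc.mp q.2
    have hqz : q.1 < z := lt_of_le_of_ne hq.2 (fun h => hqne (Subtype.ext h))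
    exact LM Ψ hΨ hind' (lt_of_lt_of_le hxw hq.1) hqz htl hab hbc hl
  rw [Finset.sum_eq_single_of_mem _ (Finset.mem_attach _ _) hrest] at hE
  rw [mul3_eT_neg hxw.le hwz.le hab hbc hl _ hT
    (fun hcon => hxw.ne (hcon.1.trans hcon.2.1.symm))] at hE
  have hSe : mul3 P R (DD Ψ ⟨(x,w,z), hxw.le, hwz.le⟩)
      (e3 R ⟨(w,z,z), hwz.le, le_refl z⟩) ⟨(a,b,c), hab, hbc⟩ = 0 := by
    by_cases hcond : z = c ∧ z = c ∧ a ≤ w ∧ w ≤ b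
    · have hfe : (⟨(w,z,z), hwz.le, le_refl z⟩ : Flag3 P)
          = ⟨(w,c,c), hcond.1 ▸ hwz.le, le_refl c⟩ :=
        Subtype.ext (show ((w,z,z) : P × P × P) = (w,c,c) by rw [hcond.1])
      rw [hfe, mul3_Se_pos (hcond.1 ▸ hwz.le) hab hbc _ hcond.2.2.1 hcond.2.2.2]
      exact hSfull a w c hcond.2.2.1 (hcond.2.2.2.trans hbc) hl
    · exact mul3_Se_neg hwz.le (le_refl z) hab hbc hl _ hS hcond
  rw [hSe] at hE
  rw [mul3_ST hab hbc hl _ _ hS hT] at hE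
  have hX : DD Ψ ⟨(x,w,z), hxw.le, hwz.le⟩ ⟨(a,a,c), le_refl a, hab.trans hbc⟩ = 0 :=
    hSfull a a c (le_refl a) (hab.trans hbc) hl
  linear_combination hE +
    hX * DD Ψ ⟨(w,z,z), hwz.le, le_refl z⟩ ⟨(a,c,c), hab.trans hbc, le_refl c⟩

include hΨ hind' in
lemma Walpha {a c : P} (hk : 1 ≤ k) (hac : a ≤ c) (hl : ell a c ≤ (k : ℕ∞) + 1) :
    DD Ψ ⟨(a,a,a), le_refl a, le_refl a⟩ ⟨(a,a,c), le_refl a, hac⟩ = 0 := by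
  have hS := Dshort Ψ hind' ⟨(a,a,a), le_refl a, le_refl a⟩ (by
    show ell a a ≤ (k : ℕ∞); rw [ell_self]; exact zero_le)
  by_cases hcrit : ell a c < (k : ℕ∞) + 1
  · exact hS _ hcrit
  have hanec : a ≠ c := crit_ne hcrit
  have haclt : a < c := lt_of_le_of_ne hac hanec
  have hlong : ¬ ell a c ≤ (k : ℕ∞) :=
    fun h => hcrit (lt_of_le_of_lt h k_lt_k1)
  have hTfull : ∀ (p q r : P) (hpq : p ≤ q) (hqr : q ≤ r), ell p r ≤ (k : ℕ∞) + 1 →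
      DD Ψ ⟨(a,c,c), hac, le_refl c⟩ ⟨(p,q,r), hpq, hqr⟩ = 0 :=
    fun p q r hpq hqr hl' => LR Ψ hΨ hind' hk haclt hlong hl hpq hqr hl'
  have hT : ∀ u : Flag3 P, ell u.1.1 u.1.2.2 < (k : ℕ∞) + 1 →
      DD Ψ ⟨(a,c,c), hac, le_refl c⟩ u = 0 := by
    intro u hu
    obtain ⟨⟨p,q,r⟩, hpq, hqr⟩ := u
    exact hTfull p q r hpq hqr (le_of_lt hu)
  have hZ : mul3 P R (e3 R ⟨(a,a,a), le_refl a, le_refl a⟩)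
      (e3 R ⟨(a,c,c), hac, le_refl c⟩) = 0 :=
    prod_unmatched (le_refl a) (le_refl a) hac (le_refl c)
      (fun h => hanec h.2.symm)
  have hE := master Ψ hΨ (le_refl a) (le_refl a) hac (le_refl c) (le_refl a) hac
  simp only [hZ, map_zero, Pi.zero_apply, zero_add] at hE
  rw [mul3_eT_pos (le_refl a) (le_refl a) hac _ (le_refl a) hac] at hE
  rw [hTfull a a c (le_refl a) hac hl] at hE
  rw [mul3_Se_pos hac (le_refl a) hac _ (le_refl a) (le_refl a)] at hE
  rw [mul3_ST (le_refl a) hac hl _ _ hS hT] at hE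
  have hY : DD Ψ ⟨(a,c,c), hac, le_refl c⟩ ⟨(a,c,c), hac, le_refl c⟩ = 0 :=
    hTfull a c c hac (le_refl c) hl
  linear_combination -hE -
    DD Ψ ⟨(a,a,a), le_refl a, le_refl a⟩ ⟨(a,a,c), le_refl a, hac⟩ * hY

include hΨ hind' in
lemma Wdelta {a c : P} (hk : 1 ≤ k) (hac : a ≤ c) (hl : ell a c ≤ (k : ℕ∞) + 1) :
    DD Ψ ⟨(c,c,c), le_refl c, le_refl c⟩ ⟨(a,c,c), hac, le_refl c⟩ = 0 := by
  have hT := Dshort Ψ hind' ⟨(c,c,c), le_refl c, le_refl c⟩ (by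
    show ell c c ≤ (k : ℕ∞); rw [ell_self]; exact zero_le)
  by_cases hcrit : ell a c < (k : ℕ∞) + 1
  · exact hT _ hcrit
  have hanec : a ≠ c := crit_ne hcrit
  have haclt : a < c := lt_of_le_of_ne hac hanec
  have hlong : ¬ ell a c ≤ (k : ℕ∞) :=
    fun h => hcrit (lt_of_le_of_lt h k_lt_k1)
  have hSfull : ∀ (p q r : P) (hpq : p ≤ q) (hqr : q ≤ r), ell p r ≤ (k : ℕ∞) + 1 →
      DD Ψ ⟨(a,a,c), le_refl a, hac⟩ ⟨(p,q,r), hpq, hqr⟩ = 0 :=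
    fun p q r hpq hqr hl' => LL Ψ hΨ hind' hk haclt hlong hl hpq hqr hl'
  have hS : ∀ u : Flag3 P, ell u.1.1 u.1.2.2 < (k : ℕ∞) + 1 →
      DD Ψ ⟨(a,a,c), le_refl a, hac⟩ u = 0 := by
    intro u hu
    obtain ⟨⟨p,q,r⟩, hpq, hqr⟩ := u
    exact hSfull p q r hpq hqr (le_of_lt hu)
  have hZ : mul3 P R (e3 R ⟨(a,a,c), le_refl a, hac⟩)
      (e3 R ⟨(c,c,c), le_refl c, le_refl c⟩) = 0 :=
    prod_unmatched (le_refl a) hac (le_refl c) (le_refl c)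
      (fun h => hanec h.1.symm)
  have hE := master Ψ hΨ (le_refl a) hac (le_refl c) (le_refl c) hac (le_refl c)
  simp only [hZ, map_zero, Pi.zero_apply, zero_add] at hE
  rw [mul3_eT_pos hac hac (le_refl c) _ (le_refl c) (le_refl c)] at hE
  rw [mul3_Se_pos (le_refl c) hac (le_refl c) _ hac (le_refl c)] at hE
  rw [hSfull a c c hac (le_refl c) hl] at hE
  rw [mul3_ST hac (le_refl c) hl _ _ hS hT] at hE
  have hX : DD Ψ ⟨(a,a,c), le_refl a, hac⟩ ⟨(a,a,c), le_refl a, hac⟩ = 0 :=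
    hSfull a a c (le_refl a) hac hl
  linear_combination -hE -
    hX * DD Ψ ⟨(c,c,c), le_refl c, le_refl c⟩ ⟨(a,c,c), hac, le_refl c⟩

include hΨ hind' in
lemma WALL {x y z : P} (hk : 1 ≤ k) (hxy : x ≤ y) (hyz : y ≤ z)
    (htl : ell x z ≤ (k : ℕ∞) + 1)
    {a b c : P} (hab : a ≤ b) (hbc : b ≤ c) (hl : ell a c ≤ (k : ℕ∞) + 1) :
    DD Ψ ⟨(x,y,z), hxy, hyz⟩ ⟨(a,b,c), hab, hbc⟩ = 0 := by
  rcases eq_or_lt_of_le hxy with hxy' | hxy' <;> rcases eq_or_lt_of_le hyz with hyz' | hyz'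
  · -- x = y = z
    have hfe : (⟨(x,y,z), hxy, hyz⟩ : Flag3 P) = ⟨(x,x,x), le_refl x, le_refl x⟩ :=
      Subtype.ext (show ((x,y,z) : P × P × P) = (x,x,x) by rw [← hyz', ← hxy'])
    rw [hfe]
    by_cases hA : x = a ∧ b = a
    · have hfe2 : (⟨(x,x,x), le_refl x, le_refl x⟩ : Flag3 P)
          = ⟨(a,a,a), le_refl a, le_refl a⟩ :=
        Subtype.ext (show ((x,x,x) : P × P × P) = (a,a,a) by rw [hA.1])
      have hfu : (⟨(a,b,c), hab, hbc⟩ : Flag3 P) = ⟨(a,a,c), le_refl a, hab.trans hbc⟩ :=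
        Subtype.ext (show ((a,b,c) : P × P × P) = (a,a,c) by rw [hA.2])
      rw [hfe2, hfu]
      exact Walpha Ψ hΨ hind' hk (hab.trans hbc) hl
    · by_cases hB : x = c ∧ b = c
      · have hfe2 : (⟨(x,x,x), le_refl x, le_refl x⟩ : Flag3 P)
            = ⟨(c,c,c), le_refl c, le_refl c⟩ :=
          Subtype.ext (show ((x,x,x) : P × P × P) = (c,c,c) by rw [hB.1])
        have hfu : (⟨(a,b,c), hab, hbc⟩ : Flag3 P) = ⟨(a,c,c), hab.trans hbc, le_refl c⟩ :=
          Subtype.ext (show ((a,b,c) : P × P × P) = (a,c,c) by rw [hB.2])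
        rw [hfe2, hfu]
        exact Wdelta Ψ hΨ hind' hk (hab.trans hbc) hl
      · refine Wshort Ψ hΨ hind' (le_refl x) (le_refl x)
          (show ell x x ≤ (k : ℕ∞) by rw [ell_self]; exact zero_le) hab hbc hl ?_ ?_
        · intro h; exact hA ⟨h.1, h.2.2.2⟩
        · intro h; exact hB ⟨h.1, h.2.2.2⟩
  · -- x = y < z
    have hxz : x < z := lt_of_le_of_lt hxy hyz'
    have hfe : (⟨(x,y,z), hxy, hyz⟩ : Flag3 P) = ⟨(x,x,z), le_refl x, hxz.le⟩ :=
      Subtype.ext (show ((x,y,z) : P × P × P) = (x,x,z) by rw [← hxy'])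
    rw [hfe]
    by_cases hsh : ell x z ≤ (k : ℕ∞)
    · refine Wshort Ψ hΨ hind' (le_refl x) hxz.le hsh hab hbc hl ?_ ?_
      · intro h; exact hxz.ne (h.1.trans h.2.2.1.symm)
      · intro h; exact hxz.ne (h.1.trans h.2.2.1.symm)
    · exact LL Ψ hΨ hind' hk hxz hsh htl hab hbc hl
  · -- x < y = z
    have hxz : x < z := lt_of_lt_of_le hxy' hyz
    have hfe : (⟨(x,y,z), hxy, hyz⟩ : Flag3 P) = ⟨(x,z,z), hxz.le, le_refl z⟩ :=
      Subtype.ext (show ((x,y,z) : P × P × P) = (x,z,z) by rw [hyz'])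
    rw [hfe]
    by_cases hsh : ell x z ≤ (k : ℕ∞)
    · refine Wshort Ψ hΨ hind' hxz.le (le_refl z) hsh hab hbc hl ?_ ?_
      · intro h; exact hxz.ne (h.1.trans h.2.2.1.symm)
      · intro h; exact hxz.ne (h.1.trans h.2.2.1.symm)
    · exact LR Ψ hΨ hind' hk hxz hsh htl hab hbc hl
  · exact LM Ψ hΨ hind' hxy' hyz' htl hab hbc hl

end WSec2

lemma mem_J3_iff {P R : Type*} [PartialOrder P] [LocallyFiniteOrder P] [CommRing R]
    {f : Flag3 P → R} {n : ℕ} :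
    f ∈ J3 P R n ↔ ∀ t : Flag3 P, ell t.1.1 t.1.2.2 < (n : ℕ∞) → f t = 0 :=
  Iff.rfl


/-- (Inductive step.) Let `Ψ` be an automorphism of `I^3(P,R)` with
`Ψ(e_{xyz}) - e_{xyz} ∈ J^3_2(P,R)` whenever `l(x,z) ≤ 1`. If, for a fixed `k ≥ 1`,
`Ψ(e_{xyz}) - e_{xyz} ∈ J^3_{k+1}(P,R)` whenever `l(x,z) ≤ k`, then
`Ψ(e_{xyz}) - e_{xyz} ∈ J^3_{k+2}(P,R)` whenever `l(x,z) ≤ k+1`. -/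
theorem automorphism_inductive_step
    {P R : Type*} [PartialOrder P] [Fintype P] [DecidableEq P] [LocallyFiniteOrder P]
    [CommRing R]
    (Ψ : (Flag3 P → R) ≃ₗ[R] (Flag3 P → R))
    (hΨ : ∀ f g : Flag3 P → R, Ψ (mul3 P R f g) = mul3 P R (Ψ f) (Ψ g))
    (hbase : ∀ t : Flag3 P, ell t.1.1 t.1.2.2 ≤ 1 → Ψ (e3 R t) - e3 R t ∈ J3 P R 2)
    (k : ℕ) (hk : 1 ≤ k)
    (hind : ∀ t : Flag3 P, ell t.1.1 t.1.2.2 ≤ (k : ℕ∞) →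
      Ψ (e3 R t) - e3 R t ∈ J3 P R (k + 1)) :
    ∀ t : Flag3 P, ell t.1.1 t.1.2.2 ≤ ((k : ℕ∞) + 1) →
      Ψ (e3 R t) - e3 R t ∈ J3 P R (k + 2) := by
  have hind' : ∀ t : Flag3 P, ell t.1.1 t.1.2.2 ≤ (k : ℕ∞) →
      ∀ u : Flag3 P, ell u.1.1 u.1.2.2 < (k : ℕ∞) + 1 →
        (Ψ (e3 R t) - e3 R t) u = 0 := by
    intro t ht u hu
    refine (mem_J3_iff.mp (hind t ht)) u ?_
    have hcast : (((k+1 : ℕ)) : ℕ∞) = (k : ℕ∞) + 1 := by push_cast; ring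
    rw [hcast]
    exact hu
  intro t htl
  obtain ⟨⟨x,y,z⟩, hxy, hyz⟩ := t
  rw [mem_J3_iff]
  intro u hu
  obtain ⟨⟨a,b,c⟩, hab, hbc⟩ := u
  have hl : ell a c ≤ (k : ℕ∞) + 1 := by
    have hcast : (((k+2 : ℕ)) : ℕ∞) = ((k : ℕ∞) + 1) + 1 := by push_cast; ring
    rw [hcast] at hu
    rw [ENat.lt_add_one_iff (kone_ne_top k)] at hu
    exact hu
  exact WALL Ψ hΨ hind' hk hxy hyz htl hab hbc hl
end

section
/- Let P be a finite poset and R a commutative unital ring. Then every derivation D of I^3(P,R) is zero. In particular, along the way one has D(e_x) = 0 for all x ∈ P (where e_x := e_{xxx}), D(e_{xxy}) = D(e_{xyy}) = 0 for all x < y, and D(e_{xzy}) = 0 for all x < z < y. -/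
section Aux

variable {P R : Type*} [PartialOrder P] [LocallyFiniteOrder P] [CommRing R] [DecidableEq P]

lemma L2a (g : Flag3 P → R) (a1 a2 a3 x y z : P)
    (ha1 : a1 ≤ a2) (ha2 : a2 ≤ a3) (hxy : x ≤ y) (hyz : y ≤ z)
    (h0 : x = a1) (h1 : a2 ≤ y) (h2 : y ≤ a3) (h3 : a3 ≤ z) :
    mul3 P R (e3 R ⟨(a1,a2,a3), ha1, ha2⟩) g ⟨(x,y,z), hxy, hyz⟩
      = g ⟨(a2,a3,z), ha2, h3⟩ := by
  subst h0
  have hmem : ((a2, a3) : P × P) ∈ (Finset.Icc x y) ×ˢ (Finset.Icc y z) := by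
    rw [Finset.mem_product, Finset.mem_Icc, Finset.mem_Icc]
    exact ⟨⟨ha1, h1⟩, ⟨h2, h3⟩⟩
  unfold mul3
  refine (Finset.sum_eq_single_of_mem ⟨(a2,a3), hmem⟩ (Finset.mem_attach _ _) ?_).trans ?_
  · rintro ⟨⟨u,v⟩, hm⟩ - hb
    simp only [e3]
    rw [if_neg, zero_mul]
    intro hEq
    simp only [Subtype.mk.injEq, Prod.mk.injEq] at hEq
    exact hb (Subtype.ext (Prod.ext hEq.2.1 hEq.2.2))
  · simp only [e3]
    rw [if_true, one_mul]

lemma L2b (g : Flag3 P → R) (a1 a2 a3 x y z : P)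
    (ha1 : a1 ≤ a2) (ha2 : a2 ≤ a3) (hxy : x ≤ y) (hyz : y ≤ z)
    (hneg : ¬(x = a1 ∧ a2 ≤ y ∧ y ≤ a3 ∧ a3 ≤ z)) :
    mul3 P R (e3 R ⟨(a1,a2,a3), ha1, ha2⟩) g ⟨(x,y,z), hxy, hyz⟩ = 0 := by
  unfold mul3
  refine Finset.sum_eq_zero ?_
  rintro ⟨⟨u,v⟩, hm⟩ -
  obtain ⟨hm1, hm2⟩ := Finset.mem_product.mp hm
  rw [Finset.mem_Icc] at hm1 hm2
  simp only [e3]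
  rw [if_neg, zero_mul]
  intro hEq
  simp only [Subtype.mk.injEq, Prod.mk.injEq] at hEq
  obtain ⟨hA, hB, hC⟩ := hEq
  subst hA; subst hB; subst hC
  exact hneg ⟨rfl, hm1.2, hm2.1, hm2.2⟩

lemma L1a (f : Flag3 P → R) (b1 b2 b3 x y z : P)
    (hb1 : b1 ≤ b2) (hb2 : b2 ≤ b3) (hxy : x ≤ y) (hyz : y ≤ z)
    (h0 : z = b3) (h1 : x ≤ b1) (h2 : b1 ≤ y) (h3 : y ≤ b2) :
    mul3 P R f (e3 R ⟨(b1,b2,b3), hb1, hb2⟩) ⟨(x,y,z), hxy, hyz⟩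
      = f ⟨(x,b1,b2), h1, hb1⟩ := by
  subst h0
  have hmem : ((b1, b2) : P × P) ∈ (Finset.Icc x y) ×ˢ (Finset.Icc y z) := by
    rw [Finset.mem_product, Finset.mem_Icc, Finset.mem_Icc]
    exact ⟨⟨h1, h2⟩, ⟨h3, hb2⟩⟩
  unfold mul3
  refine (Finset.sum_eq_single_of_mem ⟨(b1,b2), hmem⟩ (Finset.mem_attach _ _) ?_).trans ?_
  · rintro ⟨⟨u,v⟩, hm⟩ - hb
    simp only [e3]
    rw [if_neg, mul_zero]
    intro hEq
    simp only [Subtype.mk.injEq, Prod.mk.injEq] at hEq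
    exact hb (Subtype.ext (Prod.ext hEq.1 hEq.2.1))
  · simp only [e3]
    rw [if_true, mul_one]

lemma L1b (f : Flag3 P → R) (b1 b2 b3 x y z : P)
    (hb1 : b1 ≤ b2) (hb2 : b2 ≤ b3) (hxy : x ≤ y) (hyz : y ≤ z)
    (hneg : ¬(z = b3 ∧ x ≤ b1 ∧ b1 ≤ y ∧ y ≤ b2)) :
    mul3 P R f (e3 R ⟨(b1,b2,b3), hb1, hb2⟩) ⟨(x,y,z), hxy, hyz⟩ = 0 := by
  unfold mul3
  refine Finset.sum_eq_zero ?_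
  rintro ⟨⟨u,v⟩, hm⟩ -
  obtain ⟨hm1, hm2⟩ := Finset.mem_product.mp hm
  rw [Finset.mem_Icc] at hm1 hm2
  simp only [e3]
  rw [if_neg, mul_zero]
  intro hEq
  simp only [Subtype.mk.injEq, Prod.mk.injEq] at hEq
  obtain ⟨hA, hB, hC⟩ := hEq
  subst hA; subst hB; subst hC
  exact hneg ⟨rfl, hm1.1, hm1.2, hm2.1⟩

end Aux

section Aux2

variable {P R : Type*} [PartialOrder P] [LocallyFiniteOrder P] [CommRing R] [DecidableEq P]

lemma prod_zero (a1 a2 a3 b1 b2 b3 : P) (ha1 : a1 ≤ a2) (ha2 : a2 ≤ a3)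
    (hb1 : b1 ≤ b2) (hb2 : b2 ≤ b3) (hne : ((a2, a3) : P × P) ≠ (b1, b2)) :
    mul3 P R (e3 R ⟨(a1,a2,a3),ha1,ha2⟩) (e3 R ⟨(b1,b2,b3),hb1,hb2⟩) = 0 := by
  funext t
  obtain ⟨⟨x,y,z⟩,hxy,hyz⟩ := t
  show _ = (0:R)
  by_cases h : x = a1 ∧ a2 ≤ y ∧ y ≤ a3 ∧ a3 ≤ z
  · rw [L2a _ _ _ _ _ _ _ ha1 ha2 hxy hyz h.1 h.2.1 h.2.2.1 h.2.2.2]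
    simp only [e3]
    rw [if_neg]
    intro hEq
    simp only [Subtype.mk.injEq, Prod.mk.injEq] at hEq
    exact hne (Prod.ext hEq.1 hEq.2.1)
  · exact L2b _ _ _ _ _ _ _ ha1 ha2 hxy hyz h

lemma prod_pq (p q : P) (hpq : p ≤ q) :
    mul3 P R (e3 R ⟨(p,p,q), le_refl p, hpq⟩) (e3 R ⟨(p,q,q), hpq, le_refl q⟩)
      = ∑ w ∈ (Finset.Icc p q).attach,
          e3 R ⟨(p, w.1, q), (Finset.mem_Icc.mp w.2).1, (Finset.mem_Icc.mp w.2).2⟩ := by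
  funext t
  obtain ⟨⟨x,y,z⟩,hxy,hyz⟩ := t
  simp only [Finset.sum_apply]
  by_cases hx : x = p
  · subst hx
    by_cases hz : z = q
    · subst hz
      rw [L2a _ _ _ _ _ _ _ (le_refl x) hpq hxy hyz rfl hxy hyz (le_refl z)]
      rw [show e3 R (⟨(x,z,z), hpq, le_refl z⟩ : Flag3 P) ⟨(x,z,z), hpq, le_refl z⟩ = 1
        from if_pos rfl]
      symm
      refine (Finset.sum_eq_single_of_mem ⟨y, Finset.mem_Icc.mpr ⟨hxy, hyz⟩⟩
        (Finset.mem_attach _ _) ?_).trans ?_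
      · rintro ⟨w, hw⟩ - hbw
        simp only [e3]
        rw [if_neg]
        intro hEq
        simp only [Subtype.mk.injEq, Prod.mk.injEq] at hEq
        exact hbw (Subtype.ext hEq.2.1.symm)
      · simp only [e3]
        rw [if_true]
    · have hRHS : (∑ w ∈ (Finset.Icc x q).attach,
          e3 R (⟨(x, w.1, q), (Finset.mem_Icc.mp w.2).1, (Finset.mem_Icc.mp w.2).2⟩ : Flag3 P)
            ⟨(x,y,z),hxy,hyz⟩) = 0 := by
        refine Finset.sum_eq_zero ?_
        rintro ⟨w, hw⟩ -
        simp only [e3]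
        rw [if_neg]
        intro hEq
        simp only [Subtype.mk.injEq, Prod.mk.injEq] at hEq
        exact hz hEq.2.2
      rw [hRHS]
      by_cases hc : x = x ∧ x ≤ y ∧ y ≤ q ∧ q ≤ z
      · rw [L2a _ _ _ _ _ _ _ (le_refl x) hpq hxy hyz hc.1 hc.2.1 hc.2.2.1 hc.2.2.2]
        simp only [e3]
        rw [if_neg]
        intro hEq
        simp only [Subtype.mk.injEq, Prod.mk.injEq] at hEq
        exact hz hEq.2.2
      · exact L2b _ _ _ _ _ _ _ (le_refl x) hpq hxy hyz hc
  · have hRHS : (∑ w ∈ (Finset.Icc p q).attach,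
        e3 R (⟨(p, w.1, q), (Finset.mem_Icc.mp w.2).1, (Finset.mem_Icc.mp w.2).2⟩ : Flag3 P)
          ⟨(x,y,z),hxy,hyz⟩) = 0 := by
      refine Finset.sum_eq_zero ?_
      rintro ⟨w, hw⟩ -
      simp only [e3]
      rw [if_neg]
      intro hEq
      simp only [Subtype.mk.injEq, Prod.mk.injEq] at hEq
      exact hx hEq.1
    rw [hRHS]
    exact L2b _ _ _ _ _ _ _ (le_refl p) hpq hxy hyz (fun hC => hx hC.1)

end Aux2

/-- Every `R`-linear derivation `D` of `I^3(P,R)` is zero; in particular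
`D(e_x) = 0`, `D(e_{xxy}) = D(e_{xyy}) = 0` for `x < y`, and `D(e_{xzy}) = 0` for
`x < z < y`. -/
theorem derivations_are_zero
    {P R : Type*} [PartialOrder P] [Fintype P] [DecidableEq P] [LocallyFiniteOrder P]
    [CommRing R]
    (D : (Flag3 P → R) →ₗ[R] (Flag3 P → R))
    (hD : ∀ f g : Flag3 P → R,
      D (mul3 P R f g) = mul3 P R (D f) g + mul3 P R f (D g)) :
    (∀ f : Flag3 P → R, D f = 0) ∧
    (∀ x : P, D (e3 R (⟨(x, x, x), le_rfl, le_rfl⟩ : Flag3 P)) = 0) ∧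
    (∀ x y : P, ∀ h : x < y,
      D (e3 R (⟨(x, x, y), le_rfl, h.le⟩ : Flag3 P)) = 0 ∧
      D (e3 R (⟨(x, y, y), h.le, le_rfl⟩ : Flag3 P)) = 0) ∧
    (∀ x z y : P, ∀ h1 : x < z, ∀ h2 : z < y,
      D (e3 R (⟨(x, z, y), h1.le, h2.le⟩ : Flag3 P)) = 0) := by
  have key0 : ∀ (a1 a2 a3 b1 b2 b3 : P) (ha1 : a1 ≤ a2) (ha2 : a2 ≤ a3)
      (hb1 : b1 ≤ b2) (hb2 : b2 ≤ b3), ((a2, a3) : P × P) ≠ (b1, b2) → ∀ t : Flag3 P,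
      mul3 P R (D (e3 R ⟨(a1,a2,a3),ha1,ha2⟩)) (e3 R ⟨(b1,b2,b3),hb1,hb2⟩) t
        + mul3 P R (e3 R ⟨(a1,a2,a3),ha1,ha2⟩) (D (e3 R ⟨(b1,b2,b3),hb1,hb2⟩)) t = 0 := by
    intro a1 a2 a3 b1 b2 b3 ha1 ha2 hb1 hb2 hne t
    have h := hD (e3 R ⟨(a1,a2,a3),ha1,ha2⟩) (e3 R ⟨(b1,b2,b3),hb1,hb2⟩)
    rw [prod_zero _ _ _ _ _ _ ha1 ha2 hb1 hb2 hne, map_zero] at h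
    exact congrFun h.symm t
  have K1 : ∀ (p u v x m n y z : P) (hpu : p ≤ u) (huv : u ≤ v) (hxm : x ≤ m)
      (hmn : m ≤ n) (hmy : m ≤ y) (hyn : y ≤ n) (hnz : n ≤ z),
      ((u, v) : P × P) ≠ (m, n) → ¬(x = p ∧ u ≤ y ∧ y ≤ v ∧ v ≤ z) →
      D (e3 R ⟨(p,u,v),hpu,huv⟩) ⟨(x,m,n),hxm,hmn⟩ = 0 := by
    intro p u v x m n y z hpu huv hxm hmn hmy hyn hnz hne hneg
    have h := key0 p u v m n z hpu huv hmn hnz hne ⟨(x,y,z), hxm.trans hmy, hyn.trans hnz⟩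
    rw [L1a _ _ _ _ _ _ _ hmn hnz (hxm.trans hmy) (hyn.trans hnz) rfl hxm hmy hyn,
      L2b _ _ _ _ _ _ _ hpu huv (hxm.trans hmy) (hyn.trans hnz) hneg, add_zero] at h
    exact h
  have K2 : ∀ (s1 s2 s3 m n z p y : P) (hs1 : s1 ≤ s2) (hs2 : s2 ≤ s3)
      (hmn : m ≤ n) (hnz : n ≤ z) (hpm : p ≤ m) (hmy : m ≤ y) (hyn : y ≤ n),
      ((m, n) : P × P) ≠ (s1, s2) → ¬(z = s3 ∧ p ≤ s1 ∧ s1 ≤ y ∧ y ≤ s2) →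
      D (e3 R ⟨(s1,s2,s3),hs1,hs2⟩) ⟨(m,n,z),hmn,hnz⟩ = 0 := by
    intro s1 s2 s3 m n z p y hs1 hs2 hmn hnz hpm hmy hyn hne hneg
    have h := key0 p m n s1 s2 s3 hpm hmn hs1 hs2 hne ⟨(p,y,z), hpm.trans hmy, hyn.trans hnz⟩
    rw [L1b _ _ _ _ _ _ _ hs1 hs2 (hpm.trans hmy) (hyn.trans hnz) hneg,
      L2a _ _ _ _ _ _ _ hpm hmn (hpm.trans hmy) (hyn.trans hnz) rfl hmy hyn hnz,
      zero_add] at h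
    exact h
  have Hoff : ∀ (p u v x m n : P) (hpu : p ≤ u) (huv : u ≤ v) (hxm : x ≤ m) (hmn : m ≤ n),
      (⟨(p,u,v),hpu,huv⟩ : Flag3 P) ≠ ⟨(x,m,n),hxm,hmn⟩ →
      D (e3 R ⟨(p,u,v),hpu,huv⟩) ⟨(x,m,n),hxm,hmn⟩ = 0 := by
    intro p u v x m n hpu huv hxm hmn hst
    by_cases hmn2 : ((u, v) : P × P) = (m, n)
    · have hu : u = m := congrArg Prod.fst hmn2
      have hv : v = n := congrArg Prod.snd hmn2
      subst hu; subst hv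
      have hxp : x ≠ p := by
        rintro rfl
        exact hst rfl
      refine K2 p u v x u v x x hpu huv hxm hmn le_rfl le_rfl hxm
        (fun hE => hxp (congrArg Prod.fst hE)) ?_
      rintro ⟨-, h1, h2, -⟩
      exact hxp (le_antisymm h1 h2)
    · by_cases hx : x = p
      · subst hx
        by_cases h1 : u ≤ m ∧ m ≤ v
        · by_cases hnv : n = v
          · subst hnv
            have hum : u ≠ m := fun hE => hmn2 (by rw [hE])
            refine K2 x u n x m n x m hpu huv hxm hmn le_rfl hxm le_rfl
              (fun hE => hum (congrArg Prod.snd hE).symm) ?_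
            rintro ⟨-, -, -, h4⟩
            exact hum (le_antisymm h1.1 h4)
          · by_cases h2 : u ≤ n ∧ n ≤ v
            · refine K1 x u v x m n m n hpu huv hxm hmn le_rfl hmn le_rfl hmn2 ?_
              rintro ⟨-, -, -, h4⟩
              exact hnv (le_antisymm h2.2 h4)
            · refine K1 x u v x m n n n hpu huv hxm hmn hmn le_rfl le_rfl hmn2 ?_
              rintro ⟨-, ha, hb, -⟩
              exact h2 ⟨ha, hb⟩
        · refine K1 x u v x m n m n hpu huv hxm hmn le_rfl hmn le_rfl hmn2 ?_
          rintro ⟨-, ha, hb, -⟩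
          exact h1 ⟨ha, hb⟩
      · exact K1 p u v x m n m n hpu huv hxm hmn le_rfl hmn le_rfl hmn2
          (fun hC => hx hC.1)
  have hdiagrel : ∀ (p q y : P) (hpq : p ≤ q) (hpy : p ≤ y) (hyq : y ≤ q),
      D (e3 R ⟨(p,y,q),hpy,hyq⟩) ⟨(p,y,q),hpy,hyq⟩
        = D (e3 R ⟨(p,p,q),le_rfl,hpq⟩) ⟨(p,p,q),le_rfl,hpq⟩
          + D (e3 R ⟨(p,q,q),hpq,le_rfl⟩) ⟨(p,q,q),hpq,le_rfl⟩ := by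
    intro p q y hpq hpy hyq
    have h := hD (e3 R ⟨(p,p,q),le_refl p,hpq⟩) (e3 R ⟨(p,q,q),hpq,le_refl q⟩)
    rw [prod_pq p q hpq, map_sum] at h
    have h2 := congrFun h ⟨(p,y,q),hpy,hyq⟩
    simp only [Finset.sum_apply, Pi.add_apply] at h2
    rw [Finset.sum_eq_single_of_mem ⟨y, Finset.mem_Icc.mpr ⟨hpy, hyq⟩⟩
      (Finset.mem_attach _ _) ?side] at h2
    case side =>
      rintro ⟨w, hw⟩ - hbw
      refine Hoff p w q p y q (Finset.mem_Icc.mp hw).1 (Finset.mem_Icc.mp hw).2 hpy hyq ?_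
      intro hE
      simp only [Subtype.mk.injEq, Prod.mk.injEq] at hE
      exact hbw (Subtype.ext hE.2.1)
    rw [L1a _ _ _ _ _ _ _ hpq le_rfl hpy hyq rfl le_rfl hpy hyq,
      L2a _ _ _ _ _ _ _ le_rfl hpq hpy hyq rfl hpy hyq le_rfl] at h2
    exact h2
  have hdiag0 : ∀ (p y q : P) (hpy : p ≤ y) (hyq : y ≤ q),
      D (e3 R ⟨(p,y,q),hpy,hyq⟩) ⟨(p,y,q),hpy,hyq⟩ = 0 := by
    intro p y q hpy hyq
    have hpq := hpy.trans hyq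
    have h1 := hdiagrel p q p hpq le_rfl hpq
    have h2 := hdiagrel p q q hpq hpq le_rfl
    have h3 := hdiagrel p q y hpq hpy hyq
    have hB : D (e3 R ⟨(p,q,q),hpq,le_rfl⟩) ⟨(p,q,q),hpq,le_rfl⟩ = 0 :=
      left_eq_add.mp h1
    have hA : D (e3 R ⟨(p,p,q),le_rfl,hpq⟩) ⟨(p,p,q),le_rfl,hpq⟩ = 0 :=
      right_eq_add.mp h2
    rw [h3, hA, hB, add_zero]
  have hbasis : ∀ s : Flag3 P, D (e3 R s) = 0 := by
    intro s
    funext t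
    obtain ⟨⟨p,u,v⟩,hpu,huv⟩ := s
    obtain ⟨⟨x,m,n⟩,hxm,hmn⟩ := t
    show _ = (0:R)
    by_cases hst : (⟨(p,u,v),hpu,huv⟩ : Flag3 P) = ⟨(x,m,n),hxm,hmn⟩
    · rw [hst]
      exact hdiag0 x m n hxm hmn
    · exact Hoff p u v x m n hpu huv hxm hmn hst
  have hall : ∀ f : Flag3 P → R, D f = 0 := by
    intro f
    haveI : Fintype (Flag3 P) := Fintype.ofFinite _
    have hf : f = ∑ t : Flag3 P, f t • e3 R t := by
      funext t
      simp only [Finset.sum_apply, Pi.smul_apply, e3, smul_eq_mul, mul_ite, mul_one, mul_zero]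
      rw [Finset.sum_ite_eq (Finset.univ : Finset (Flag3 P)) t f]
      simp
    rw [hf, map_sum]
    refine Finset.sum_eq_zero ?_
    intro t _
    rw [map_smul, hbasis, smul_zero]
  exact ⟨hall, fun x => hall _, fun x y h => ⟨hall _, hall _⟩, fun x z y h1 h2 => hall _⟩
end
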